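/- arXiv:1811.02431 — 8 statements merged into one kernel-verified Lean document; each statement's English description precedes it below -/
import Mathlib

section
/- Given a formal one-parameter deformation (ξ_t, η_t, φ_t) of an A-module homomorphism φ: M → N, the linear-term triple (ξ_1, η_1, φ_1) is a 1-cocycle in the deformation complex C^*(φ); that is, δξ_1 = 0 in C^2(A;End(M)), δη_1 = 0 in C^2(A;End(N)), and φξ_1 − η_1φ − δφ_1 = 0 in C^1(A;Hom_k(M,N)). -/
open Finset

variable {k A M N : Type*} [CommRing k] [Ring A] [Algebra k A]
  [AddCommGroup M] [Module k M] [AddCommGroup N] [Module k N]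

/-- `(ξ_t = Σ ξᵢ tⁱ, η_t = Σ ηᵢ tⁱ, φ_t = Σ φᵢ tⁱ)` is a formal one-parameter deformation
of the `A`-module homomorphism `φ : M → N`, where the module structures on `M` and `N` are
given by the algebra homomorphisms `ξ₀ : A → End_k(M)` and `η₀ : A → End_k(N)`.
The conditions `ξ_t(rs) = ξ_t(r)ξ_t(s)`, `η_t(rs) = η_t(r)η_t(s)` and
`φ_t(ξ_t(r)m) = η_t(r)φ_t(m)` are written out coefficientwise. -/
def IsFormalDeformation (ξ0 : A →ₐ[k] Module.End k M) (η0 : A →ₐ[k] Module.End k N)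
    (φ : M →ₗ[k] N) (ξ : ℕ → (A →ₗ[k] Module.End k M)) (η : ℕ → (A →ₗ[k] Module.End k N))
    (Φ : ℕ → (M →ₗ[k] N)) : Prop :=
  ξ 0 = ξ0.toLinearMap ∧ η 0 = η0.toLinearMap ∧ Φ 0 = φ ∧
  (∀ (l : ℕ) (r s : A), ξ l (r * s) = ∑ ij ∈ antidiagonal l, ξ ij.1 r * ξ ij.2 s) ∧
  (∀ (l : ℕ) (r s : A), η l (r * s) = ∑ ij ∈ antidiagonal l, η ij.1 r * η ij.2 s) ∧
  (∀ (l : ℕ) (r : A), ∑ ij ∈ antidiagonal l, Φ ij.1 ∘ₗ (ξ ij.2 r : M →ₗ[k] M) =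
    ∑ ij ∈ antidiagonal l, (η ij.1 r : N →ₗ[k] N) ∘ₗ Φ ij.2)

/-- A deformation of order `n` of the module homomorphism `φ : M → N`: the deformation
equations hold modulo `t^{n+1}`, i.e. for all `l ≤ n`. -/
def IsDeformationOfOrder (ξ0 : A →ₐ[k] Module.End k M) (η0 : A →ₐ[k] Module.End k N)
    (φ : M →ₗ[k] N) (ξ : ℕ → (A →ₗ[k] Module.End k M)) (η : ℕ → (A →ₗ[k] Module.End k N))
    (Φ : ℕ → (M →ₗ[k] N)) (n : ℕ) : Prop :=
  ξ 0 = ξ0.toLinearMap ∧ η 0 = η0.toLinearMap ∧ Φ 0 = φ ∧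
  (∀ l ≤ n, ∀ r s : A, ξ l (r * s) = ∑ ij ∈ antidiagonal l, ξ ij.1 r * ξ ij.2 s) ∧
  (∀ l ≤ n, ∀ r s : A, η l (r * s) = ∑ ij ∈ antidiagonal l, η ij.1 r * η ij.2 s) ∧
  (∀ l ≤ n, ∀ r : A, ∑ ij ∈ antidiagonal l, Φ ij.1 ∘ₗ (ξ ij.2 r : M →ₗ[k] M) =
    ∑ ij ∈ antidiagonal l, (η ij.1 r : N →ₗ[k] N) ∘ₗ Φ ij.2)

/-- `(u, v, w)` is a 1-cocycle in the deformation complex `C^*(φ)`: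
`δu = 0` in `C²(A;End M)`, `δv = 0` in `C²(A;End N)` and `φu - vφ - δw = 0`
in `C¹(A;Hom_k(M,N))`. -/
def IsOneCocycle (ξ0 : A →ₐ[k] Module.End k M) (η0 : A →ₐ[k] Module.End k N)
    (φ : M →ₗ[k] N) (u : A →ₗ[k] Module.End k M) (v : A →ₗ[k] Module.End k N)
    (w : M →ₗ[k] N) : Prop :=
  (∀ a b : A, ξ0 a * u b - u (a * b) + u a * ξ0 b = 0) ∧
  (∀ a b : A, η0 a * v b - v (a * b) + v a * η0 b = 0) ∧
  (∀ a : A, φ ∘ₗ (u a : M →ₗ[k] M) - (v a : N →ₗ[k] N) ∘ₗ φ -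
    ((η0 a : N →ₗ[k] N) ∘ₗ w - w ∘ₗ (ξ0 a : M →ₗ[k] M)) = 0)

/-- The infinitesimal `(ξ₁, η₁, φ₁)` of a formal one-parameter deformation
`(ξ_t, η_t, φ_t)` of the module homomorphism `φ` is a 1-cocycle in `C^*(φ)`. -/
theorem infinitesimal_isOneCocycle (ξ0 : A →ₐ[k] Module.End k M)
    (η0 : A →ₐ[k] Module.End k N) (φ : M →ₗ[k] N)
    (ξ : ℕ → (A →ₗ[k] Module.End k M)) (η : ℕ → (A →ₗ[k] Module.End k N))
    (Φ : ℕ → (M →ₗ[k] N)) (h : IsFormalDeformation ξ0 η0 φ ξ η Φ) :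
    IsOneCocycle ξ0 η0 φ (ξ 1) (η 1) (Φ 1) := by
  obtain ⟨h0, h0', h0'', hξ, hη, hΦ⟩ := h
  have had1 : (antidiagonal 1 : Finset (ℕ × ℕ)) = {(0, 1), (1, 0)} := by decide
  refine ⟨fun a b => ?_, fun a b => ?_, fun a => ?_⟩
  · have := hξ 1 a b
    rw [had1] at this
    simp [h0] at this
    rw [this]; abel
  · have := hη 1 a b
    rw [had1] at this
    simp [h0'] at this
    rw [this]; abel
  · have := hΦ 1 a
    rw [had1] at this
    simp [h0, h0'', h0'] at this
    rw [sub_sub, sub_eq_zero, eq_sub_of_add_eq this]; abel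
end

section
/- If (ξ_t, η_t, φ_t) is a formal deformation of φ: M → N with (ξ_i, η_i, φ_i) = 0 for 1 ≤ i ≤ n−1, then the n-infinitesimal (ξ_n, η_n, φ_n) is a 1-cocycle in the deformation complex C^*(φ). -/
open Finset

variable {k A M N : Type*} [CommRing k] [Ring A] [Algebra k A]
  [AddCommGroup M] [Module k M] [AddCommGroup N] [Module k N]

lemma sum_antidiagonal_two {X : Type*} [AddCommMonoid X] (n : ℕ) (hn : 1 ≤ n)
    (f : ℕ × ℕ → X) (hf : ∀ p ∈ antidiagonal n, p.1 ≠ 0 → p.1 ≠ n → f p = 0) :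
    ∑ p ∈ antidiagonal n, f p = f (0, n) + f (n, 0) := by
  have hne : n ≠ 0 := by omega
  have hsub : ({(0, n), (n, 0)} : Finset (ℕ × ℕ)) ⊆ antidiagonal n := by
    intro p hp
    simp only [Finset.mem_insert, Finset.mem_singleton] at hp
    rcases hp with rfl | rfl <;> simp [Finset.HasAntidiagonal.mem_antidiagonal]
  rw [← Finset.sum_subset hsub]
  · rw [Finset.sum_pair (by simp [hne, Ne.symm hne])]
  · intro p hp hnp
    simp only [Finset.mem_insert, Finset.mem_singleton, not_or] at hnp
    rw [Finset.HasAntidiagonal.mem_antidiagonal] at hp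
    apply hf p (by simp [Finset.HasAntidiagonal.mem_antidiagonal, hp])
    · intro h0; exact hnp.1 (Prod.ext h0 (by omega))
    · intro h0; exact hnp.2 (Prod.ext h0 (by omega))

/-- If `(ξᵢ, ηᵢ, φᵢ) = 0` for `1 ≤ i ≤ n - 1`, then the `n`-infinitesimal
`(ξₙ, ηₙ, φₙ)` of the deformation `(ξ_t, η_t, φ_t)` is a 1-cocycle in `C^*(φ)`. -/
theorem nInfinitesimal_isOneCocycle (ξ0 : A →ₐ[k] Module.End k M)
    (η0 : A →ₐ[k] Module.End k N) (φ : M →ₗ[k] N)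
    (ξ : ℕ → (A →ₗ[k] Module.End k M)) (η : ℕ → (A →ₗ[k] Module.End k N))
    (Φ : ℕ → (M →ₗ[k] N)) (h : IsFormalDeformation ξ0 η0 φ ξ η Φ)
    (n : ℕ) (hn : 1 ≤ n)
    (hvanish : ∀ i, 1 ≤ i → i < n → ξ i = 0 ∧ η i = 0 ∧ Φ i = 0) :
    IsOneCocycle ξ0 η0 φ (ξ n) (η n) (Φ n) := by
  obtain ⟨hξ0, hη0, hΦ0, hξ, hη, hΦ⟩ := h
  have hvξ : ∀ i, i ≠ 0 → i < n → ξ i = 0 := fun i h1 h2 => (hvanish i (by omega) h2).1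
  have hvη : ∀ i, i ≠ 0 → i < n → η i = 0 := fun i h1 h2 => (hvanish i (by omega) h2).2.1
  have hvΦ : ∀ i, i ≠ 0 → i < n → Φ i = 0 := fun i h1 h2 => (hvanish i (by omega) h2).2.2
  refine ⟨fun a b => ?_, fun a b => ?_, fun a => ?_⟩
  · have key := hξ n a b
    rw [sum_antidiagonal_two n hn _ (fun p hp h1 h2 => ?_)] at key
    · simp only [hξ0, AlgHom.toLinearMap_apply] at key
      rw [key]; abel
    · rw [Finset.HasAntidiagonal.mem_antidiagonal] at hp
      simp [hvξ p.1 h1 (by omega)]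
  · have key := hη n a b
    rw [sum_antidiagonal_two n hn _ (fun p hp h1 h2 => ?_)] at key
    · simp only [hη0, AlgHom.toLinearMap_apply] at key
      rw [key]; abel
    · rw [Finset.HasAntidiagonal.mem_antidiagonal] at hp
      simp [hvη p.1 h1 (by omega)]
  · have key := hΦ n a
    rw [sum_antidiagonal_two n hn _ (fun p hp h1 h2 => ?_),
        sum_antidiagonal_two n hn _ (fun p hp h1 h2 => ?_)] at key
    · simp only [hξ0, hη0, hΦ0, AlgHom.toLinearMap_apply] at key
      have e : (φ ∘ₗ ((ξ n) a : M →ₗ[k] M) - ((η n) a : N →ₗ[k] N) ∘ₗ φ -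
          ((η0 a : N →ₗ[k] N) ∘ₗ Φ n - Φ n ∘ₗ (ξ0 a : M →ₗ[k] M)))
          = (φ ∘ₗ ((ξ n) a : M →ₗ[k] M) + Φ n ∘ₗ (ξ0 a : M →ₗ[k] M))
            - ((η0 a : N →ₗ[k] N) ∘ₗ Φ n + ((η n) a : N →ₗ[k] N) ∘ₗ φ) := by abel
      rw [e, sub_eq_zero]
      exact key
    · rw [Finset.HasAntidiagonal.mem_antidiagonal] at hp
      simp [hvη p.1 h1 (by omega)]
    · rw [Finset.HasAntidiagonal.mem_antidiagonal] at hp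
      simp [hvΦ p.1 h1 (by omega)]
end

section
/- Let (ξ_t, η_t, φ_t) be a deformation of order n of a module homomorphism φ: M → N. Then the (n+1)-th obstruction cochain Ob_{n+1} = (O_1, O_2, O_3) ∈ C^2(φ), with O_1(a,b) = −Σ_{i+j=n+1, i,j>0} ξ_i(a)ξ_j(b), O_2(a,b) = −Σ_{i+j=n+1, i,j>0} η_i(a)η_j(b), and O_3(a) = Σ_{i+j=n+1, i,j>0} (η_i(a)∘φ_j − φ_i∘ξ_j(a)), is a 2-cocycle: d^2 Ob_{n+1} = 0. -/
open Finset

variable {k A M N : Type*} [CommRing k] [Ring A] [Algebra k A]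
  [AddCommGroup M] [Module k M] [AddCommGroup N] [Module k N]

/-- The differential `d¹(u,v,w) = (δu, δv, φu - vφ - δw)` of the deformation complex,
applied to a 1-cochain `(u,v,w) ∈ C¹(φ)`, written out as a triple of functions. -/
def dOne (ξ0 : A →ₐ[k] Module.End k M) (η0 : A →ₐ[k] Module.End k N) (φ : M →ₗ[k] N)
    (u : A →ₗ[k] Module.End k M) (v : A →ₗ[k] Module.End k N) (w : M →ₗ[k] N) :
    (A → A → Module.End k M) × (A → A → Module.End k N) × (A → (M →ₗ[k] N)) :=
  ⟨fun a b => ξ0 a * u b - u (a * b) + u a * ξ0 b,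
   fun a b => η0 a * v b - v (a * b) + v a * η0 b,
   fun a => φ ∘ₗ (u a : M →ₗ[k] M) - (v a : N →ₗ[k] N) ∘ₗ φ -
     ((η0 a : N →ₗ[k] N) ∘ₗ w - w ∘ₗ (ξ0 a : M →ₗ[k] M))⟩

/-- The `(n+1)`-th obstruction cochain `Ob_{n+1} = (O₁, O₂, O₃) ∈ C²(φ)` of a deformation
of order `n`: `O₁(a,b) = -Σ_{i+j=n+1, i,j>0} ξᵢ(a)ξⱼ(b)`,
`O₂(a,b) = -Σ_{i+j=n+1, i,j>0} ηᵢ(a)ηⱼ(b)`,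
`O₃(a) = Σ_{i+j=n+1, i,j>0} (ηᵢ(a)∘φⱼ - φᵢ∘ξⱼ(a))`. -/
def obstruction (ξ : ℕ → (A →ₗ[k] Module.End k M)) (η : ℕ → (A →ₗ[k] Module.End k N))
    (Φ : ℕ → (M →ₗ[k] N)) (n : ℕ) :
    (A → A → Module.End k M) × (A → A → Module.End k N) × (A → (M →ₗ[k] N)) :=
  ⟨fun a b => -∑ ij ∈ (antidiagonal (n + 1)).filter (fun ij => ij.1 ≠ 0 ∧ ij.2 ≠ 0),
      ξ ij.1 a * ξ ij.2 b,
   fun a b => -∑ ij ∈ (antidiagonal (n + 1)).filter (fun ij => ij.1 ≠ 0 ∧ ij.2 ≠ 0),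
      η ij.1 a * η ij.2 b,
   fun a => ∑ ij ∈ (antidiagonal (n + 1)).filter (fun ij => ij.1 ≠ 0 ∧ ij.2 ≠ 0),
      ((η ij.1 a : N →ₗ[k] N) ∘ₗ Φ ij.2 - Φ ij.1 ∘ₗ (ξ ij.2 a : M →ₗ[k] M))⟩

section PolyAux

open Polynomial

variable {R : Type*} [Ring R]

noncomputable def trP (n : ℕ) (f : ℕ → R) : R[X] := ∑ i ∈ Icc 1 n, C (f i) * X ^ i

lemma coeff_trP (n : ℕ) (f : ℕ → R) (j : ℕ) :
    (trP n f).coeff j = if j ∈ Icc 1 n then f j else 0 := by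
  rw [trP, finset_sum_coeff]
  simp only [coeff_C_mul, coeff_X_pow, mul_ite, mul_one, mul_zero]
  exact Finset.sum_ite_eq (Icc 1 n) j f

lemma coeff_trP_zero (n : ℕ) (f : ℕ → R) : (trP n f).coeff 0 = 0 := by
  rw [coeff_trP]; simp

noncomputable def flP (n : ℕ) (f : ℕ → R) : R[X] := C (f 0) + trP n f

lemma coeff_flP (n : ℕ) (f : ℕ → R) {j : ℕ} (hj : j ≤ n) : (flP n f).coeff j = f j := by
  rw [flP, coeff_add, coeff_C, coeff_trP]
  by_cases h0 : j = 0
  · simp [h0, mem_Icc]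
  · simp [h0, mem_Icc, Nat.one_le_iff_ne_zero.mpr h0, hj]

lemma coeff_flP_mul (n : ℕ) (f g : ℕ → R) {l : ℕ} (hl : l ≤ n) :
    (flP n f * flP n g).coeff l = ∑ ij ∈ antidiagonal l, f ij.1 * g ij.2 := by
  rw [coeff_mul]
  refine Finset.sum_congr rfl fun ij hij => ?_
  rw [HasAntidiagonal.mem_antidiagonal] at hij
  rw [coeff_flP n f (by omega), coeff_flP n g (by omega)]

lemma filter_sum_eq_coeff (n : ℕ) (f g : ℕ → R) :
    ∑ ij ∈ (antidiagonal (n + 1)).filter (fun ij => ij.1 ≠ 0 ∧ ij.2 ≠ 0), f ij.1 * g ij.2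
      = (trP n f * trP n g).coeff (n + 1) := by
  rw [coeff_mul, Finset.sum_filter]
  refine Finset.sum_congr rfl fun ij hij => ?_
  rw [HasAntidiagonal.mem_antidiagonal] at hij
  rw [coeff_trP, coeff_trP]
  by_cases h1 : ij.1 = 0
  · simp [h1, mem_Icc]
  · by_cases h2 : ij.2 = 0
    · simp [h2, mem_Icc]
    · have m1 : ij.1 ∈ Icc 1 n := mem_Icc.mpr ⟨Nat.one_le_iff_ne_zero.mpr h1, by omega⟩
      have m2 : ij.2 ∈ Icc 1 n := mem_Icc.mpr ⟨Nat.one_le_iff_ne_zero.mpr h2, by omega⟩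
      simp [h1, h2, m1, m2]

lemma coeff_mul_eq_zero_left (n : ℕ) {p q : R[X]} (hp : p.coeff 0 = 0)
    (hq : ∀ l ≤ n, q.coeff l = 0) : (p * q).coeff (n + 1) = 0 := by
  rw [coeff_mul]
  refine Finset.sum_eq_zero fun ij hij => ?_
  rw [HasAntidiagonal.mem_antidiagonal] at hij
  by_cases h : ij.1 = 0
  · rw [h, hp, zero_mul]
  · rw [hq ij.2 (by omega), mul_zero]

lemma coeff_mul_eq_zero_right (n : ℕ) {p q : R[X]} (hp : ∀ l ≤ n, p.coeff l = 0)
    (hq : q.coeff 0 = 0) : (p * q).coeff (n + 1) = 0 := by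
  rw [coeff_mul]
  refine Finset.sum_eq_zero fun ij hij => ?_
  rw [HasAntidiagonal.mem_antidiagonal] at hij
  by_cases h : ij.2 = 0
  · rw [h, hq, mul_zero]
  · rw [hp ij.1 (by omega), zero_mul]

lemma aux1 (n : ℕ) (fa fb fc fab fbc : ℕ → R)
    (hab : ∀ l ≤ n, fab l = ∑ ij ∈ antidiagonal l, fa ij.1 * fb ij.2)
    (hbc : ∀ l ≤ n, fbc l = ∑ ij ∈ antidiagonal l, fb ij.1 * fc ij.2) :
    fa 0 * (-∑ ij ∈ (antidiagonal (n + 1)).filter (fun ij => ij.1 ≠ 0 ∧ ij.2 ≠ 0), fb ij.1 * fc ij.2)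
      - (-∑ ij ∈ (antidiagonal (n + 1)).filter (fun ij => ij.1 ≠ 0 ∧ ij.2 ≠ 0), fab ij.1 * fc ij.2)
      + (-∑ ij ∈ (antidiagonal (n + 1)).filter (fun ij => ij.1 ≠ 0 ∧ ij.2 ≠ 0), fa ij.1 * fbc ij.2)
      - (-∑ ij ∈ (antidiagonal (n + 1)).filter (fun ij => ij.1 ≠ 0 ∧ ij.2 ≠ 0), fa ij.1 * fb ij.2) * fc 0
      = 0 := by
  have hQ1 : ∀ l ≤ n, (flP n fab - flP n fa * flP n fb).coeff l = 0 := fun l hl => by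
    rw [coeff_sub, coeff_flP n fab hl, coeff_flP_mul n fa fb hl, hab l hl, sub_self]
  have hQ2 : ∀ l ≤ n, (flP n fbc - flP n fb * flP n fc).coeff l = 0 := fun l hl => by
    rw [coeff_sub, coeff_flP n fbc hl, coeff_flP_mul n fb fc hl, hbc l hl, sub_self]
  rw [filter_sum_eq_coeff n fb fc, filter_sum_eq_coeff n fab fc,
      filter_sum_eq_coeff n fa fbc, filter_sum_eq_coeff n fa fb]
  have lift : fa 0 * -((trP n fb * trP n fc).coeff (n + 1))
      - -((trP n fab * trP n fc).coeff (n + 1))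
      + -((trP n fa * trP n fbc).coeff (n + 1))
      - -((trP n fa * trP n fb).coeff (n + 1)) * fc 0
      = (C (fa 0) * -(trP n fb * trP n fc) - -(trP n fab * trP n fc)
         + -(trP n fa * trP n fbc) - -(trP n fa * trP n fb) * C (fc 0)).coeff (n + 1) := by
    simp [coeff_sub, coeff_add, coeff_neg, coeff_C_mul, coeff_mul_C]
  rw [lift]
  have h0ab : fab 0 = fa 0 * fb 0 := by simpa using hab 0 (Nat.zero_le n)
  have h0bc : fbc 0 = fb 0 * fc 0 := by simpa using hbc 0 (Nat.zero_le n)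
  have hpoly : C (fa 0) * -(trP n fb * trP n fc) - -(trP n fab * trP n fc)
      + -(trP n fa * trP n fbc) - -(trP n fa * trP n fb) * C (fc 0)
      = (flP n fab - flP n fa * flP n fb) * trP n fc
        - trP n fa * (flP n fbc - flP n fb * flP n fc) := by
    simp only [flP, h0ab, h0bc, map_mul]
    noncomm_ring
  rw [hpoly, coeff_sub,
      coeff_mul_eq_zero_right n hQ1 (coeff_trP_zero n fc),
      coeff_mul_eq_zero_left n (coeff_trP_zero n fa) hQ2, sub_self]

lemma aux3 (n : ℕ) (xa xb xab ya yb yab p : ℕ → R)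
    (hxab : ∀ l ≤ n, xab l = ∑ ij ∈ antidiagonal l, xa ij.1 * xb ij.2)
    (hyab : ∀ l ≤ n, yab l = ∑ ij ∈ antidiagonal l, ya ij.1 * yb ij.2)
    (hpa : ∀ l ≤ n, ∑ ij ∈ antidiagonal l, p ij.1 * xa ij.2
        = ∑ ij ∈ antidiagonal l, ya ij.1 * p ij.2)
    (hpb : ∀ l ≤ n, ∑ ij ∈ antidiagonal l, p ij.1 * xb ij.2
        = ∑ ij ∈ antidiagonal l, yb ij.1 * p ij.2) :
    p 0 * (-∑ ij ∈ (antidiagonal (n + 1)).filter (fun ij => ij.1 ≠ 0 ∧ ij.2 ≠ 0), xa ij.1 * xb ij.2)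
      - (-∑ ij ∈ (antidiagonal (n + 1)).filter (fun ij => ij.1 ≠ 0 ∧ ij.2 ≠ 0), ya ij.1 * yb ij.2) * p 0
      - (ya 0 * ∑ ij ∈ (antidiagonal (n + 1)).filter (fun ij => ij.1 ≠ 0 ∧ ij.2 ≠ 0),
            (yb ij.1 * p ij.2 - p ij.1 * xb ij.2)
         - ∑ ij ∈ (antidiagonal (n + 1)).filter (fun ij => ij.1 ≠ 0 ∧ ij.2 ≠ 0),
            (yab ij.1 * p ij.2 - p ij.1 * xab ij.2)
         + (∑ ij ∈ (antidiagonal (n + 1)).filter (fun ij => ij.1 ≠ 0 ∧ ij.2 ≠ 0),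
            (ya ij.1 * p ij.2 - p ij.1 * xa ij.2)) * xb 0) = 0 := by
  have hQx : ∀ l ≤ n, (flP n xab - flP n xa * flP n xb).coeff l = 0 := fun l hl => by
    rw [coeff_sub, coeff_flP n xab hl, coeff_flP_mul n xa xb hl, hxab l hl, sub_self]
  have hQy : ∀ l ≤ n, (flP n yab - flP n ya * flP n yb).coeff l = 0 := fun l hl => by
    rw [coeff_sub, coeff_flP n yab hl, coeff_flP_mul n ya yb hl, hyab l hl, sub_self]
  have hQpa : ∀ l ≤ n, (flP n p * flP n xa - flP n ya * flP n p).coeff l = 0 := fun l hl => by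
    rw [coeff_sub, coeff_flP_mul n p xa hl, coeff_flP_mul n ya p hl, hpa l hl, sub_self]
  have hQpb : ∀ l ≤ n, (flP n p * flP n xb - flP n yb * flP n p).coeff l = 0 := fun l hl => by
    rw [coeff_sub, coeff_flP_mul n p xb hl, coeff_flP_mul n yb p hl, hpb l hl, sub_self]
  simp only [Finset.sum_sub_distrib]
  rw [filter_sum_eq_coeff n xa xb, filter_sum_eq_coeff n ya yb,
      filter_sum_eq_coeff n yb p, filter_sum_eq_coeff n p xb,
      filter_sum_eq_coeff n yab p, filter_sum_eq_coeff n p xab,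
      filter_sum_eq_coeff n ya p, filter_sum_eq_coeff n p xa]
  have lift : p 0 * -((trP n xa * trP n xb).coeff (n + 1))
      - -((trP n ya * trP n yb).coeff (n + 1)) * p 0
      - (ya 0 * ((trP n yb * trP n p).coeff (n + 1) - (trP n p * trP n xb).coeff (n + 1))
         - ((trP n yab * trP n p).coeff (n + 1) - (trP n p * trP n xab).coeff (n + 1))
         + ((trP n ya * trP n p).coeff (n + 1) - (trP n p * trP n xa).coeff (n + 1)) * xb 0)
      = (C (p 0) * -(trP n xa * trP n xb) - -(trP n ya * trP n yb) * C (p 0)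
         - (C (ya 0) * (trP n yb * trP n p - trP n p * trP n xb)
            - (trP n yab * trP n p - trP n p * trP n xab)
            + (trP n ya * trP n p - trP n p * trP n xa) * C (xb 0))).coeff (n + 1) := by
    simp [coeff_sub, coeff_add, coeff_neg, coeff_C_mul, coeff_mul_C]
  rw [lift]
  have h0x : xab 0 = xa 0 * xb 0 := by simpa using hxab 0 (Nat.zero_le n)
  have h0y : yab 0 = ya 0 * yb 0 := by simpa using hyab 0 (Nat.zero_le n)
  have h0a : p 0 * xa 0 = ya 0 * p 0 := by simpa using hpa 0 (Nat.zero_le n)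
  have h0b : p 0 * xb 0 = yb 0 * p 0 := by simpa using hpb 0 (Nat.zero_le n)
  have hpoly : C (p 0) * -(trP n xa * trP n xb) - -(trP n ya * trP n yb) * C (p 0)
         - (C (ya 0) * (trP n yb * trP n p - trP n p * trP n xb)
            - (trP n yab * trP n p - trP n p * trP n xab)
            + (trP n ya * trP n p - trP n p * trP n xa) * C (xb 0))
      = (flP n yab - flP n ya * flP n yb) * trP n p
        - trP n p * (flP n xab - flP n xa * flP n xb)
        - trP n ya * (flP n p * flP n xb - flP n yb * flP n p)
        - (flP n p * flP n xa - flP n ya * flP n p) * trP n xb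
        + (C (p 0 * xa 0) - C (ya 0 * p 0)) * trP n xb
        + trP n ya * (C (p 0 * xb 0) - C (yb 0 * p 0)) := by
    simp only [flP, h0x, h0y, map_mul]
    noncomm_ring
  rw [hpoly, h0a, h0b, sub_self, sub_self, zero_mul, mul_zero, add_zero, add_zero,
      coeff_sub, coeff_sub, coeff_sub,
      coeff_mul_eq_zero_right n hQy (coeff_trP_zero n p),
      coeff_mul_eq_zero_left n (coeff_trP_zero n p) hQx,
      coeff_mul_eq_zero_left n (coeff_trP_zero n ya) hQpb,
      coeff_mul_eq_zero_right n hQpa (coeff_trP_zero n xb)]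
  simp

end PolyAux

section Emb

variable (K M' N' : Type*) [CommRing K] [AddCommGroup M'] [Module K M']
  [AddCommGroup N'] [Module K N']

noncomputable def dmE : Module.End K M' →+ Module.End K (M' × N') :=
  AddMonoidHom.mk' (fun u => LinearMap.inl K M' N' ∘ₗ u ∘ₗ LinearMap.fst K M' N')
    (fun u v => by
      refine LinearMap.ext fun x => ?_
      simp)

noncomputable def dnE : Module.End K N' →+ Module.End K (M' × N') :=
  AddMonoidHom.mk' (fun v => LinearMap.inr K M' N' ∘ₗ v ∘ₗ LinearMap.snd K M' N')
    (fun u v => by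
      refine LinearMap.ext fun x => ?_
      simp)

noncomputable def cE : (M' →ₗ[K] N') →+ Module.End K (M' × N') :=
  AddMonoidHom.mk' (fun f => LinearMap.inr K M' N' ∘ₗ f ∘ₗ LinearMap.fst K M' N')
    (fun u v => by
      refine LinearMap.ext fun x => ?_
      simp)

lemma dmE_mul (u v : Module.End K M') :
    dmE K M' N' (u * v) = dmE K M' N' u * dmE K M' N' v := by
  refine LinearMap.ext fun x => ?_
  simp [dmE, Module.End.mul_apply]

lemma dnE_mul (u v : Module.End K N') :
    dnE K M' N' (u * v) = dnE K M' N' u * dnE K M' N' v := by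
  refine LinearMap.ext fun x => ?_
  simp [dnE, Module.End.mul_apply]

lemma cE_comp_dm (f : M' →ₗ[K] N') (u : Module.End K M') :
    cE K M' N' (f ∘ₗ u) = cE K M' N' f * dmE K M' N' u := by
  refine LinearMap.ext fun x => ?_
  simp [cE, dmE, Module.End.mul_apply]

lemma dn_comp_cE (v : Module.End K N') (f : M' →ₗ[K] N') :
    cE K M' N' ((v : N' →ₗ[K] N') ∘ₗ f) = dnE K M' N' v * cE K M' N' f := by
  refine LinearMap.ext fun x => ?_
  simp [cE, dnE, Module.End.mul_apply]

lemma cE_eq_zero {f : M' →ₗ[K] N'} (h : cE K M' N' f = 0) : f = 0 := by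
  refine LinearMap.ext fun m => ?_
  have := LinearMap.congr_fun h (m, (0 : N'))
  simpa [cE, Prod.ext_iff] using this

end Emb


/-- The `(n+1)`-th obstruction cochain `Ob_{n+1}(φ_t) = (O₁,O₂,O₃)` of a deformation of
order `n` of `φ` is a 2-cocycle: `d² Ob_{n+1} = (δO₁, δO₂, φO₁ - O₂φ - δO₃) = 0`. -/
theorem obstruction_isTwoCocycle (ξ0 : A →ₐ[k] Module.End k M)
    (η0 : A →ₐ[k] Module.End k N) (φ : M →ₗ[k] N)
    (ξ : ℕ → (A →ₗ[k] Module.End k M)) (η : ℕ → (A →ₗ[k] Module.End k N))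
    (Φ : ℕ → (M →ₗ[k] N)) (n : ℕ) (h : IsDeformationOfOrder ξ0 η0 φ ξ η Φ n) :
    (∀ a b c : A, ξ0 a * (obstruction ξ η Φ n).1 b c - (obstruction ξ η Φ n).1 (a * b) c
        + (obstruction ξ η Φ n).1 a (b * c) - (obstruction ξ η Φ n).1 a b * ξ0 c = 0) ∧
    (∀ a b c : A, η0 a * (obstruction ξ η Φ n).2.1 b c - (obstruction ξ η Φ n).2.1 (a * b) c
        + (obstruction ξ η Φ n).2.1 a (b * c) - (obstruction ξ η Φ n).2.1 a b * η0 c = 0) ∧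
    (∀ a b : A, φ ∘ₗ ((obstruction ξ η Φ n).1 a b : M →ₗ[k] M)
        - ((obstruction ξ η Φ n).2.1 a b : N →ₗ[k] N) ∘ₗ φ
        - ((η0 a : N →ₗ[k] N) ∘ₗ (obstruction ξ η Φ n).2.2 b
            - (obstruction ξ η Φ n).2.2 (a * b)
            + (obstruction ξ η Φ n).2.2 a ∘ₗ (ξ0 b : M →ₗ[k] M)) = 0) := by
  obtain ⟨hξ0, hη0, hΦ0, hξm, hηm, hφm⟩ := h
  have eξ : ∀ r : A, (ξ0 r : Module.End k M) = ξ 0 r := fun r => by rw [hξ0]; rfl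
  have eη : ∀ r : A, (η0 r : Module.End k N) = η 0 r := fun r => by rw [hη0]; rfl
  refine ⟨fun a b c => ?_, fun a b c => ?_, fun a b => ?_⟩
  · simp only [obstruction]
    rw [eξ a, eξ c]
    exact aux1 n (fun i => ξ i a) (fun i => ξ i b) (fun i => ξ i c)
      (fun i => ξ i (a * b)) (fun i => ξ i (b * c))
      (fun l hl => hξm l hl a b) (fun l hl => hξm l hl b c)
  · simp only [obstruction]
    rw [eη a, eη c]
    exact aux1 n (fun i => η i a) (fun i => η i b) (fun i => η i c)
      (fun i => η i (a * b)) (fun i => η i (b * c))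
      (fun l hl => hηm l hl a b) (fun l hl => hηm l hl b c)
  · simp only [obstruction]
    rw [eη a, eξ b, ← hΦ0]
    have hxab : ∀ l ≤ n, dmE k M N (ξ l (a * b))
        = ∑ ij ∈ antidiagonal l, dmE k M N (ξ ij.1 a) * dmE k M N (ξ ij.2 b) := fun l hl => by
      rw [hξm l hl a b, map_sum]
      exact Finset.sum_congr rfl fun ij _ => dmE_mul k M N _ _
    have hyab : ∀ l ≤ n, dnE k M N (η l (a * b))
        = ∑ ij ∈ antidiagonal l, dnE k M N (η ij.1 a) * dnE k M N (η ij.2 b) := fun l hl => by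
      rw [hηm l hl a b, map_sum]
      exact Finset.sum_congr rfl fun ij _ => dnE_mul k M N _ _
    have hpa : ∀ l ≤ n, ∑ ij ∈ antidiagonal l, cE k M N (Φ ij.1) * dmE k M N (ξ ij.2 a)
        = ∑ ij ∈ antidiagonal l, dnE k M N (η ij.1 a) * cE k M N (Φ ij.2) := fun l hl => by
      have h1 := congrArg (cE k M N) (hφm l hl a)
      rw [map_sum, map_sum] at h1
      simpa only [cE_comp_dm, dn_comp_cE] using h1
    have hpb : ∀ l ≤ n, ∑ ij ∈ antidiagonal l, cE k M N (Φ ij.1) * dmE k M N (ξ ij.2 b)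
        = ∑ ij ∈ antidiagonal l, dnE k M N (η ij.1 b) * cE k M N (Φ ij.2) := fun l hl => by
      have h1 := congrArg (cE k M N) (hφm l hl b)
      rw [map_sum, map_sum] at h1
      simpa only [cE_comp_dm, dn_comp_cE] using h1
    apply cE_eq_zero k M N
    rw [map_sub, map_sub, map_add]
    simp only [cE_comp_dm, dn_comp_cE, map_neg, map_sum, map_sub, dmE_mul, dnE_mul]
    exact aux3 n (fun i => dmE k M N (ξ i a)) (fun i => dmE k M N (ξ i b))
      (fun i => dmE k M N (ξ i (a * b)))
      (fun i => dnE k M N (η i a)) (fun i => dnE k M N (η i b))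
      (fun i => dnE k M N (η i (a * b)))
      (fun i => cE k M N (Φ i)) hxab hyab hpa hpb
end

section
/- A deformation (ξ_t, η_t, φ_t) of order n of a module homomorphism φ extends to a deformation of order n+1 if and only if the cohomology class of the (n+1)-th obstruction cochain Ob_{n+1}(φ_t) in H^2(φ) vanishes. -/
open Finset

variable {k A M N : Type*} [CommRing k] [Ring A] [Algebra k A]
  [AddCommGroup M] [Module k M] [AddCommGroup N] [Module k N]

lemma aux_split_antidiagonal {E : Type*} [AddCommMonoid E] (n : ℕ) (f : ℕ × ℕ → E) :
    ∑ ij ∈ antidiagonal (n + 1), f ij =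
      f (0, n + 1) + f (n + 1, 0) +
        ∑ ij ∈ (antidiagonal (n + 1)).filter (fun ij => ij.1 ≠ 0 ∧ ij.2 ≠ 0), f ij := by
  rw [← Finset.sum_filter_add_sum_filter_not (antidiagonal (n + 1))
      (fun ij => ij.1 ≠ 0 ∧ ij.2 ≠ 0) f, add_comm]
  congr 1
  have hset : (antidiagonal (n + 1)).filter (fun ij => ¬(ij.1 ≠ 0 ∧ ij.2 ≠ 0)) =
      {((0 : ℕ), n + 1), (n + 1, 0)} := by
    ext ⟨i, j⟩
    simp only [Finset.mem_filter, Finset.HasAntidiagonal.mem_antidiagonal, Finset.mem_insert,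
      Finset.mem_singleton, Prod.mk.injEq]
    omega
  rw [hset, Finset.sum_insert (by simp), Finset.sum_singleton]

lemma aux_mem_filter_le {n : ℕ} {ij : ℕ × ℕ}
    (h : ij ∈ (antidiagonal (n + 1)).filter (fun ij => ij.1 ≠ 0 ∧ ij.2 ≠ 0)) :
    ij.1 ≤ n ∧ ij.2 ≤ n := by
  simp only [Finset.mem_filter, Finset.HasAntidiagonal.mem_antidiagonal] at h
  omega

lemma aux_rearr1 {E : Type*} [AddCommGroup E] {a x b s : E}
    (h : a - x + b = -s) : x = a + b + s := by
  have h0 : a - x + b - -s = 0 := sub_eq_zero.mpr h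
  rw [← sub_eq_zero, show x - (a + b + s) = -(a - x + b - -s) by abel, h0, neg_zero]

lemma aux_rearr1' {E : Type*} [AddCommGroup E] {a x b s : E}
    (h : x = a + b + s) : a - x + b = -s := by rw [h]; abel

lemma aux_rearr2 {E : Type*} [AddCommGroup E] {p q r s SL SR : E}
    (h : p - q - (r - s) = SR - SL) : p + s + SL = r + q + SR := by
  have h0 : p - q - (r - s) - (SR - SL) = 0 := sub_eq_zero.mpr h
  rw [← sub_eq_zero,
    show p + s + SL - (r + q + SR) = p - q - (r - s) - (SR - SL) by abel, h0]

lemma aux_rearr2' {E : Type*} [AddCommGroup E] {p q r s SL SR : E}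
    (h : p + s + SL = r + q + SR) : p - q - (r - s) = SR - SL := by
  have h0 : p + s + SL - (r + q + SR) = 0 := sub_eq_zero.mpr h
  rw [← sub_eq_zero,
    show p - q - (r - s) - (SR - SL) = p + s + SL - (r + q + SR) by abel, h0]

/-- A deformation `(ξ_t, η_t, φ_t)` of order `n` of `φ` extends to a deformation of order
`n+1` if and only if the cohomology class of the `(n+1)`-th obstruction cochain vanishes,
i.e. `Ob_{n+1}(φ_t)` is a coboundary `d¹(ξ_{n+1}, η_{n+1}, φ_{n+1})`. -/
theorem extendsOrderSucc_iff_obstruction_isCoboundary (ξ0 : A →ₐ[k] Module.End k M)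
    (η0 : A →ₐ[k] Module.End k N) (φ : M →ₗ[k] N)
    (ξ : ℕ → (A →ₗ[k] Module.End k M)) (η : ℕ → (A →ₗ[k] Module.End k N))
    (Φ : ℕ → (M →ₗ[k] N)) (n : ℕ) (h : IsDeformationOfOrder ξ0 η0 φ ξ η Φ n) :
    (∃ (ξ' : ℕ → (A →ₗ[k] Module.End k M)) (η' : ℕ → (A →ₗ[k] Module.End k N))
        (Φ' : ℕ → (M →ₗ[k] N)),
      IsDeformationOfOrder ξ0 η0 φ ξ' η' Φ' (n + 1) ∧
      (∀ i ≤ n, ξ' i = ξ i) ∧ (∀ i ≤ n, η' i = η i) ∧ (∀ i ≤ n, Φ' i = Φ i)) ↔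
    (∃ (u : A →ₗ[k] Module.End k M) (v : A →ₗ[k] Module.End k N) (w : M →ₗ[k] N),
      dOne ξ0 η0 φ u v w = obstruction ξ η Φ n) := by
  obtain ⟨hξ0, hη0, hΦ0, hξm, hηm, hΦm⟩ := h
  constructor
  · rintro ⟨ξ', η', Φ', ⟨hξ0', hη0', hΦ0', hξ', hη', hΦ'⟩, heξ, heη, heΦ⟩
    refine ⟨ξ' (n + 1), η' (n + 1), Φ' (n + 1), ?_⟩
    unfold dOne obstruction
    refine Prod.ext ?_ (Prod.ext ?_ ?_)
    · funext a b
      have h1 := hξ' (n + 1) le_rfl a b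
      rw [aux_split_antidiagonal n (fun ij => ξ' ij.1 a * ξ' ij.2 b)] at h1
      simp only [hξ0', AlgHom.toLinearMap_apply] at h1
      rw [Finset.sum_congr rfl (fun ij hij => by
        obtain ⟨h1, h2⟩ := aux_mem_filter_le hij
        rw [heξ _ h1, heξ _ h2])] at h1
      exact aux_rearr1' h1
    · funext a b
      have h1 := hη' (n + 1) le_rfl a b
      rw [aux_split_antidiagonal n (fun ij => η' ij.1 a * η' ij.2 b)] at h1
      simp only [hη0', AlgHom.toLinearMap_apply] at h1
      rw [Finset.sum_congr rfl (fun ij hij => by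
        obtain ⟨h1, h2⟩ := aux_mem_filter_le hij
        rw [heη _ h1, heη _ h2])] at h1
      exact aux_rearr1' h1
    · funext a
      dsimp only
      have h1 := hΦ' (n + 1) le_rfl a
      rw [aux_split_antidiagonal n (fun ij => Φ' ij.1 ∘ₗ (ξ' ij.2 a : M →ₗ[k] M)),
        aux_split_antidiagonal n (fun ij => (η' ij.1 a : N →ₗ[k] N) ∘ₗ Φ' ij.2)] at h1
      simp only [hξ0', hη0', hΦ0', AlgHom.toLinearMap_apply] at h1
      have hsL : ∑ ij ∈ (antidiagonal (n + 1)).filter (fun ij => ij.1 ≠ 0 ∧ ij.2 ≠ 0),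
          Φ' ij.1 ∘ₗ (ξ' ij.2 a : M →ₗ[k] M) =
          ∑ ij ∈ (antidiagonal (n + 1)).filter (fun ij => ij.1 ≠ 0 ∧ ij.2 ≠ 0),
          Φ ij.1 ∘ₗ (ξ ij.2 a : M →ₗ[k] M) := Finset.sum_congr rfl (fun ij hij => by
          obtain ⟨h1, h2⟩ := aux_mem_filter_le hij
          rw [heΦ _ h1, heξ _ h2])
      have hsR : ∑ ij ∈ (antidiagonal (n + 1)).filter (fun ij => ij.1 ≠ 0 ∧ ij.2 ≠ 0),
          (η' ij.1 a : N →ₗ[k] N) ∘ₗ Φ' ij.2 =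
          ∑ ij ∈ (antidiagonal (n + 1)).filter (fun ij => ij.1 ≠ 0 ∧ ij.2 ≠ 0),
          (η ij.1 a : N →ₗ[k] N) ∘ₗ Φ ij.2 := Finset.sum_congr rfl (fun ij hij => by
          obtain ⟨h1, h2⟩ := aux_mem_filter_le hij
          rw [heη _ h1, heΦ _ h2])
      rw [hsL, hsR] at h1
      rw [Finset.sum_sub_distrib]
      exact aux_rearr2' h1
  · rintro ⟨u, v, w, hd⟩
    have hd1 := congrArg Prod.fst hd
    have hd2 := congrArg (fun p => p.2.1) hd
    have hd3 := congrArg (fun p => p.2.2) hd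
    simp only [dOne, obstruction] at hd1 hd2 hd3
    set ξ' : ℕ → (A →ₗ[k] Module.End k M) := fun i => if i = n + 1 then u else ξ i with hξ'd
    set η' : ℕ → (A →ₗ[k] Module.End k N) := fun i => if i = n + 1 then v else η i with hη'd
    set Φ' : ℕ → (M →ₗ[k] N) := fun i => if i = n + 1 then w else Φ i with hΦ'd
    have hξ'lt : ∀ i ≤ n, ξ' i = ξ i := fun i hi => if_neg (by omega)
    have hη'lt : ∀ i ≤ n, η' i = η i := fun i hi => if_neg (by omega)
    have hΦ'lt : ∀ i ≤ n, Φ' i = Φ i := fun i hi => if_neg (by omega)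
    have hξ'top : ξ' (n + 1) = u := if_pos rfl
    have hη'top : η' (n + 1) = v := if_pos rfl
    have hΦ'top : Φ' (n + 1) = w := if_pos rfl
    refine ⟨ξ', η', Φ', ⟨?_, ?_, ?_, ?_, ?_, ?_⟩, hξ'lt, hη'lt, hΦ'lt⟩
    · rw [hξ'lt 0 (Nat.zero_le n), hξ0]
    · rw [hη'lt 0 (Nat.zero_le n), hη0]
    · rw [hΦ'lt 0 (Nat.zero_le n), hΦ0]
    · intro l hl r s
      rcases Nat.lt_succ_iff_lt_or_eq.mp (Nat.lt_succ_of_le hl) with hln | rfl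
      · replace hln := Nat.lt_succ_iff.mp hln
        rw [hξ'lt l hln, hξm l hln r s]
        refine Finset.sum_congr rfl fun ij hij => ?_
        have hmem := Finset.HasAntidiagonal.mem_antidiagonal.mp hij
        rw [hξ'lt _ (by omega), hξ'lt _ (by omega)]
      · rw [hξ'top, aux_split_antidiagonal n (fun ij => ξ' ij.1 r * ξ' ij.2 s)]
        simp only [hξ'lt 0 (Nat.zero_le n), hξ'top, hξ0, AlgHom.toLinearMap_apply]
        rw [Finset.sum_congr rfl (fun ij hij => by
          obtain ⟨h1, h2⟩ := aux_mem_filter_le hij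
          rw [hξ'lt _ h1, hξ'lt _ h2])]
        exact aux_rearr1 (congrFun (congrFun hd1 r) s)
    · intro l hl r s
      rcases Nat.lt_succ_iff_lt_or_eq.mp (Nat.lt_succ_of_le hl) with hln | rfl
      · replace hln := Nat.lt_succ_iff.mp hln
        rw [hη'lt l hln, hηm l hln r s]
        refine Finset.sum_congr rfl fun ij hij => ?_
        have hmem := Finset.HasAntidiagonal.mem_antidiagonal.mp hij
        rw [hη'lt _ (by omega), hη'lt _ (by omega)]
      · rw [hη'top, aux_split_antidiagonal n (fun ij => η' ij.1 r * η' ij.2 s)]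
        simp only [hη'lt 0 (Nat.zero_le n), hη'top, hη0, AlgHom.toLinearMap_apply]
        rw [Finset.sum_congr rfl (fun ij hij => by
          obtain ⟨h1, h2⟩ := aux_mem_filter_le hij
          rw [hη'lt _ h1, hη'lt _ h2])]
        exact aux_rearr1 (congrFun (congrFun hd2 r) s)
    · intro l hl r
      rcases Nat.lt_succ_iff_lt_or_eq.mp (Nat.lt_succ_of_le hl) with hln | rfl
      · replace hln := Nat.lt_succ_iff.mp hln
        have hsL : ∑ ij ∈ antidiagonal l, Φ' ij.1 ∘ₗ (ξ' ij.2 r : M →ₗ[k] M) =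
            ∑ ij ∈ antidiagonal l, Φ ij.1 ∘ₗ (ξ ij.2 r : M →ₗ[k] M) :=
          Finset.sum_congr rfl (fun ij hij => by
            have hmem := Finset.HasAntidiagonal.mem_antidiagonal.mp hij
            rw [hΦ'lt _ (by omega : ij.1 ≤ n), hξ'lt _ (by omega : ij.2 ≤ n)])
        have hsR : ∑ ij ∈ antidiagonal l, (η' ij.1 r : N →ₗ[k] N) ∘ₗ Φ' ij.2 =
            ∑ ij ∈ antidiagonal l, (η ij.1 r : N →ₗ[k] N) ∘ₗ Φ ij.2 :=
          Finset.sum_congr rfl (fun ij hij => by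
            have hmem := Finset.HasAntidiagonal.mem_antidiagonal.mp hij
            rw [hη'lt _ (by omega : ij.1 ≤ n), hΦ'lt _ (by omega : ij.2 ≤ n)])
        rw [hsL, hsR]
        exact hΦm l hln r
      · rw [aux_split_antidiagonal n (fun ij => Φ' ij.1 ∘ₗ (ξ' ij.2 r : M →ₗ[k] M)),
          aux_split_antidiagonal n (fun ij => (η' ij.1 r : N →ₗ[k] N) ∘ₗ Φ' ij.2)]
        simp only [hξ'lt 0 (Nat.zero_le n), hη'lt 0 (Nat.zero_le n), hΦ'lt 0 (Nat.zero_le n),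
          hξ'top, hη'top, hΦ'top, hξ0, hη0, hΦ0, AlgHom.toLinearMap_apply]
        have hsL : ∑ ij ∈ (antidiagonal (n + 1)).filter (fun ij => ij.1 ≠ 0 ∧ ij.2 ≠ 0),
            Φ' ij.1 ∘ₗ (ξ' ij.2 r : M →ₗ[k] M) =
            ∑ ij ∈ (antidiagonal (n + 1)).filter (fun ij => ij.1 ≠ 0 ∧ ij.2 ≠ 0),
            Φ ij.1 ∘ₗ (ξ ij.2 r : M →ₗ[k] M) := Finset.sum_congr rfl (fun ij hij => by
            obtain ⟨h1, h2⟩ := aux_mem_filter_le hij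
            rw [hΦ'lt _ h1, hξ'lt _ h2])
        have hsR : ∑ ij ∈ (antidiagonal (n + 1)).filter (fun ij => ij.1 ≠ 0 ∧ ij.2 ≠ 0),
            (η' ij.1 r : N →ₗ[k] N) ∘ₗ Φ' ij.2 =
            ∑ ij ∈ (antidiagonal (n + 1)).filter (fun ij => ij.1 ≠ 0 ∧ ij.2 ≠ 0),
            (η ij.1 r : N →ₗ[k] N) ∘ₗ Φ ij.2 := Finset.sum_congr rfl (fun ij hij => by
            obtain ⟨h1, h2⟩ := aux_mem_filter_le hij
            rw [hη'lt _ h1, hΦ'lt _ h2])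
        rw [hsL, hsR]
        have h3 := congrFun hd3 r
        rw [Finset.sum_sub_distrib] at h3
        exact aux_rearr2 h3
end

section
/- If (Ψ_t, Θ_t) is a formal isomorphism between two formal deformations (ξ_t, η_t, φ_t) and (ξ̃_t, η̃_t, φ̃_t) of a module homomorphism φ: M → N, then ξ_1 − ξ̃_1 = δ^0ψ_1, η_1 − η̃_1 = δ^0θ_1, and φ_1 − φ̃_1 = φψ_1 − θ_1φ; consequently (ξ_1, η_1, φ_1) − (ξ̃_1, η̃_1, φ̃_1) = d^1(ψ_1, θ_1, 0), so the infinitesimals of equivalent deformations have the same cohomology class in H^1(φ). -/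
open Finset

variable {k A M N : Type*} [CommRing k] [Ring A] [Algebra k A]
  [AddCommGroup M] [Module k M] [AddCommGroup N] [Module k N]

/-- `(Ψ_t = Σ ψᵢ tⁱ, Θ_t = Σ θᵢ tⁱ)` is a formal isomorphism from the deformation
`(ξ_t, η_t, φ_t)` to the deformation `(ξ'_t, η'_t, φ'_t)` of the module homomorphism `φ`:
`ψ₀ = id`, `θ₀ = id`, `ξ'_t(r) Ψ_t = Ψ_t ξ_t(r)`, `η'_t(r) Θ_t = Θ_t η_t(r)` and
`φ'_t ∘ Ψ_t = Θ_t ∘ φ_t`, written out coefficientwise (Cauchy products). -/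
def IsFormalIso (ξ : ℕ → (A →ₗ[k] Module.End k M)) (η : ℕ → (A →ₗ[k] Module.End k N))
    (Φ : ℕ → (M →ₗ[k] N)) (ξ' : ℕ → (A →ₗ[k] Module.End k M))
    (η' : ℕ → (A →ₗ[k] Module.End k N)) (Φ' : ℕ → (M →ₗ[k] N))
    (ψ : ℕ → Module.End k M) (θ : ℕ → Module.End k N) : Prop :=
  ψ 0 = 1 ∧ θ 0 = 1 ∧
  (∀ (l : ℕ) (r : A), ∑ ij ∈ antidiagonal l, ξ' ij.1 r * ψ ij.2 =
    ∑ ij ∈ antidiagonal l, ψ ij.1 * ξ ij.2 r) ∧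
  (∀ (l : ℕ) (r : A), ∑ ij ∈ antidiagonal l, η' ij.1 r * θ ij.2 =
    ∑ ij ∈ antidiagonal l, θ ij.1 * η ij.2 r) ∧
  (∀ l : ℕ, ∑ ij ∈ antidiagonal l, Φ' ij.1 ∘ₗ (ψ ij.2 : M →ₗ[k] M) =
    ∑ ij ∈ antidiagonal l, (θ ij.1 : N →ₗ[k] N) ∘ₗ Φ ij.2)

/-- The trivial (constant) deformation coefficients attached to a structure map. -/
def trivialCoeffs {F : Type*} [Zero F] (f : F) : ℕ → F := fun i => if i = 0 then f else 0

/-- If `(Ψ_t, Θ_t)` is a formal isomorphism between two formal deformations of `φ`, then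
`ξ₁ - ξ'₁ = δ⁰ψ₁`, `η₁ - η'₁ = δ⁰θ₁` and `φ₁ - φ'₁ = φψ₁ - θ₁φ`; that is, the difference
of the infinitesimals is the coboundary `d¹(ψ₁, θ₁, 0)`, so equivalent deformations have
cohomologous infinitesimals. -/
theorem infinitesimal_cohomologous_of_equivalent (ξ0 : A →ₐ[k] Module.End k M)
    (η0 : A →ₐ[k] Module.End k N) (φ : M →ₗ[k] N)
    (ξ ξ' : ℕ → (A →ₗ[k] Module.End k M)) (η η' : ℕ → (A →ₗ[k] Module.End k N))
    (Φ Φ' : ℕ → (M →ₗ[k] N)) (ψ : ℕ → Module.End k M) (θ : ℕ → Module.End k N)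
    (hdef : IsFormalDeformation ξ0 η0 φ ξ η Φ)
    (hdef' : IsFormalDeformation ξ0 η0 φ ξ' η' Φ')
    (hiso : IsFormalIso ξ η Φ ξ' η' Φ' ψ θ) :
    (∀ a : A, ξ 1 a - ξ' 1 a = ξ0 a * ψ 1 - ψ 1 * ξ0 a) ∧
    (∀ a : A, η 1 a - η' 1 a = η0 a * θ 1 - θ 1 * η0 a) ∧
    (Φ 1 - Φ' 1 = φ ∘ₗ (ψ 1 : M →ₗ[k] M) - (θ 1 : N →ₗ[k] N) ∘ₗ φ) := by
  obtain ⟨hξ0, hη0, hΦ0, -, -, -⟩ := hdef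
  obtain ⟨hξ0', hη0', hΦ0', -, -, -⟩ := hdef'
  obtain ⟨hψ0, hθ0, hξiso, hηiso, hΦiso⟩ := hiso
  have had : antidiagonal 1 = {(0,1),(1,0)} := rfl
  refine ⟨fun a => ?_, fun a => ?_, ?_⟩
  · have := hξiso 1 a
    rw [had, Finset.sum_insert (by decide), Finset.sum_singleton, Finset.sum_insert (by decide), Finset.sum_singleton] at this
    simp only [hψ0, hξ0, hξ0',
      mul_one, one_mul] at this
    simp only [AlgHom.toLinearMap_apply] at this ⊢
    linear_combination (norm := abel) -this
  · have := hηiso 1 a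
    rw [had, Finset.sum_insert (by decide), Finset.sum_singleton, Finset.sum_insert (by decide), Finset.sum_singleton] at this
    simp only [hθ0, hη0, hη0',
      mul_one, one_mul] at this
    simp only [AlgHom.toLinearMap_apply] at this ⊢
    linear_combination (norm := abel) -this
  · have := hΦiso 1
    rw [had, Finset.sum_insert (by decide), Finset.sum_singleton, Finset.sum_insert (by decide), Finset.sum_singleton] at this
    simp only [hψ0, hθ0, hΦ0, hΦ0'] at this
    simp only [Module.End.one_eq_id, LinearMap.comp_id, LinearMap.id_comp] at this
    linear_combination (norm := abel) -this
end

section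
/- Every non-trivial formal deformation of a module homomorphism φ: M → N is equivalent to a formal deformation whose n-infinitesimal is not a coboundary in C^1(φ), for some n ≥ 1. -/
open Finset

variable {k A M N : Type*} [CommRing k] [Ring A] [Algebra k A]
  [AddCommGroup M] [Module k M] [AddCommGroup N] [Module k N]

section DefAuxSec
open PowerSeries
namespace DefAux


variable {S : Type*} [Ring S]

/-- coefficients of the right inverse of a power series with constant coefficient 1 -/
noncomputable def invCoeff (c : ℕ → S) : ℕ → S
  | 0 => 1
  | (l+1) => -∑ j ∈ (Finset.range (l+1)).attach, c (l+1-(j : ℕ)) * invCoeff c j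
decreasing_by exact Finset.mem_range.mp j.2

lemma invCoeff_zero (c : ℕ → S) : invCoeff c 0 = 1 := by rw [invCoeff]

lemma invCoeff_succ (c : ℕ → S) (l : ℕ) :
    invCoeff c (l+1) = -∑ j ∈ Finset.range (l+1), c (l+1-j) * invCoeff c j := by
  rw [invCoeff, ← Finset.sum_attach (Finset.range (l+1)) (fun j => c (l+1-j) * invCoeff c j)]

lemma right_inverse (f : PowerSeries S) (hf : coeff 0 f = 1) :
    f * PowerSeries.mk (invCoeff (fun i => coeff i f)) = 1 ∧
      coeff 0 (PowerSeries.mk (invCoeff (fun i => coeff i f))) = 1 := by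
  set c : ℕ → S := fun i => coeff i f with hc
  constructor
  · ext l
    rcases l with _ | l
    · simp [PowerSeries.coeff_mul, hf, invCoeff_zero]
    · rw [PowerSeries.coeff_mul, Finset.Nat.sum_antidiagonal_eq_sum_range_succ_mk]
      have hsplit : ∑ i ∈ Finset.range (l + 2), coeff i f *
          PowerSeries.coeff (l + 1 - i) (PowerSeries.mk (invCoeff c)) =
          c 0 * invCoeff c (l+1) + ∑ i ∈ Finset.range (l + 1), c (i+1) * invCoeff c (l - i) := by
        rw [Finset.sum_range_succ' (fun i => coeff i f *
          PowerSeries.coeff (l + 1 - i) (PowerSeries.mk (invCoeff c))) (l+1)]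
        simp only [PowerSeries.coeff_mk, Nat.sub_zero, hc]
        rw [add_comm]
        congr 1
        refine Finset.sum_congr rfl fun i hi => ?_
        simp only [Finset.mem_range] at hi
        congr 2
        omega
      rw [hsplit]
      have hrefl : ∑ i ∈ Finset.range (l + 1), c (i+1) * invCoeff c (l - i) =
          ∑ j ∈ Finset.range (l + 1), c (l+1-j) * invCoeff c j := by
        rw [← Finset.sum_range_reflect (fun j => c (l+1-j) * invCoeff c j) (l+1)]
        refine Finset.sum_congr rfl fun i hi => ?_
        simp only [Finset.mem_range] at hi
        congr 2 <;> omega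
      rw [hrefl]
      have : invCoeff c (l+1) = -∑ j ∈ Finset.range (l+1), c (l+1-j) * invCoeff c j :=
        invCoeff_succ c l
      have h0 : c 0 = 1 := hf
      rw [h0, one_mul, this]
      simp [PowerSeries.coeff_one]
  · simp [invCoeff_zero]

lemma exists_inverse (f : PowerSeries S) (hf : coeff 0 f = 1) :
    ∃ g, f * g = 1 ∧ g * f = 1 ∧ coeff 0 g = 1 := by
  obtain ⟨h1, h0⟩ := right_inverse f hf
  set g := PowerSeries.mk (invCoeff (fun i => coeff i f)) with hg
  obtain ⟨h1', _⟩ := right_inverse g h0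
  set g' := PowerSeries.mk (invCoeff (fun i => coeff i g)) with hg'
  have : f = g' := by
    calc f = f * (g * g') := by rw [h1', mul_one]
    _ = (f * g) * g' := by rw [mul_assoc]
    _ = g' := by rw [h1, one_mul]
  exact ⟨g, h1, by rw [this]; exact h1', h0⟩

lemma coeff_monomial_mul' (x : S) (f : PowerSeries S) (l n : ℕ) :
    coeff l (PowerSeries.monomial n x * f) =
      if n ≤ l then x * coeff (l - n) f else 0 := by
  rw [PowerSeries.coeff_mul]
  by_cases h : n ≤ l
  · rw [if_pos h, Finset.sum_eq_single (n, l - n)]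
    · rw [PowerSeries.coeff_monomial, if_pos rfl]
    · rintro ⟨i, j⟩ hij hne
      rw [Finset.HasAntidiagonal.mem_antidiagonal] at hij
      rw [PowerSeries.coeff_monomial, if_neg, zero_mul]
      rintro rfl
      exact hne (by simp; omega)
    · intro hmem
      exact absurd (Finset.HasAntidiagonal.mem_antidiagonal.2 (by omega)) hmem
  · rw [if_neg h]
    refine Finset.sum_eq_zero fun ij hij => ?_
    rw [Finset.HasAntidiagonal.mem_antidiagonal] at hij
    rw [PowerSeries.coeff_monomial, if_neg, zero_mul]
    rintro rfl
    omega

lemma coeff_mul_monomial' (x : S) (f : PowerSeries S) (l n : ℕ) :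
    coeff l (f * PowerSeries.monomial n x) =
      if n ≤ l then coeff (l - n) f * x else 0 := by
  rw [PowerSeries.coeff_mul]
  by_cases h : n ≤ l
  · rw [if_pos h, Finset.sum_eq_single (l - n, n)]
    · rw [PowerSeries.coeff_monomial, if_pos rfl]
    · rintro ⟨i, j⟩ hij hne
      rw [Finset.HasAntidiagonal.mem_antidiagonal] at hij
      rw [PowerSeries.coeff_monomial, if_neg, mul_zero]
      rintro rfl
      exact hne (by simp; omega)
    · intro hmem
      exact absurd (Finset.HasAntidiagonal.mem_antidiagonal.2 (by omega)) hmem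
  · rw [if_neg h]
    refine Finset.sum_eq_zero fun ij hij => ?_
    rw [Finset.HasAntidiagonal.mem_antidiagonal] at hij
    rw [PowerSeries.coeff_monomial, if_neg, mul_zero]
    rintro rfl
    omega

/-- key conjugation computation: coefficients of `(1 + xtⁿ) Z h` when `h = 1 - xtⁿ h`. -/
lemma conj_coeff (n : ℕ) (x : S) (Z h : PowerSeries S)
    (hh : h = 1 - PowerSeries.monomial n x * h) (h0 : coeff 0 h = 1) :
    (∀ l, l < n → coeff l ((1 + PowerSeries.monomial n x) * Z * h) = coeff l Z) ∧
    coeff n ((1 + PowerSeries.monomial n x) * Z * h) =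
      coeff n Z + x * coeff 0 Z - coeff 0 Z * x := by
  set X := PowerSeries.monomial n x with hX
  have key : (1 + X) * Z * h = Z + (X * Z - Z * X) * h := by
    have e1 : (1 + X) * Z * h = Z * h + X * Z * h := by
      rw [add_mul, one_mul, add_mul]
    rw [e1]
    nth_rewrite 1 [hh]
    rw [mul_sub, mul_one, sub_mul, mul_assoc, mul_assoc]
    abel
  rw [key]
  set C := X * Z - Z * X with hC
  have hClow : ∀ i, i < n → coeff i C = 0 := by
    intro i hi
    rw [hC, map_sub, coeff_monomial_mul', coeff_mul_monomial', if_neg (by omega),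
      if_neg (by omega), sub_zero]
  have hCn : coeff n C = x * coeff 0 Z - coeff 0 Z * x := by
    rw [hC, map_sub, coeff_monomial_mul', coeff_mul_monomial', if_pos le_rfl,
      if_pos le_rfl, Nat.sub_self]
  constructor
  · intro l hl
    rw [map_add, PowerSeries.coeff_mul]
    have : ∑ ij ∈ antidiagonal l, coeff ij.1 C * coeff ij.2 h = 0 := by
      refine Finset.sum_eq_zero fun ij hij => ?_
      have := Finset.HasAntidiagonal.antidiagonal.fst_le hij
      rw [hClow ij.1 (lt_of_le_of_lt this hl), zero_mul]
    rw [this, add_zero]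
  · rw [map_add, PowerSeries.coeff_mul, Finset.sum_eq_single (n, 0)]
    · rw [hCn, h0, mul_one]; abel
    · rintro ⟨i, j⟩ hij hne
      rw [Finset.HasAntidiagonal.mem_antidiagonal] at hij
      have : i < n := by
        rcases Nat.lt_or_ge i n with h | h
        · exact h
        · exfalso; exact hne (by simp; omega)
      rw [hClow i this, zero_mul]
    · intro hmem
      exact absurd (Finset.HasAntidiagonal.mem_antidiagonal.2 (by omega)) hmem

/-- convolution with a gauge that is the identity up to degree `m` -/
lemma conv_id_left {a b : ℕ → S} (ha0 : a 0 = 1) (m l : ℕ)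
    (ha : ∀ i, 1 ≤ i → i ≤ m → a i = 0) (hl : l ≤ m) :
    ∑ ij ∈ antidiagonal l, a ij.1 * b ij.2 = b l := by
  rw [Finset.sum_eq_single (0, l)]
  · rw [ha0, one_mul]
  · rintro ⟨i, j⟩ hij hne
    rw [Finset.HasAntidiagonal.mem_antidiagonal] at hij
    have hi : 1 ≤ i := by
      rcases Nat.eq_zero_or_pos i with rfl | h
      · exact absurd (by simp; omega) hne
      · exact h
    rw [ha i hi (by omega), zero_mul]
  · intro hmem
    exact absurd (Finset.HasAntidiagonal.mem_antidiagonal.2 (by omega)) hmem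






variable {k A M N : Type*} [CommRing k] [Ring A] [Algebra k A]
  [AddCommGroup M] [Module k M] [AddCommGroup N] [Module k N]

/-- embedding of `Hom(M,N)` as the "lower left corner" of `End (M × N)` -/
def eH : (M →ₗ[k] N) →ₗ[k] Module.End k (M × N) where
  toFun w := (LinearMap.inr k M N) ∘ₗ w ∘ₗ (LinearMap.fst k M N)
  map_add' w w' := by apply LinearMap.ext; intro x; simp
  map_smul' c w := by apply LinearMap.ext; intro x; simp

/-- projection back -/
def piH (T : Module.End k (M × N)) : M →ₗ[k] N :=
  (LinearMap.snd k M N) ∘ₗ T ∘ₗ (LinearMap.inl k M N)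

lemma piH_eH (w : M →ₗ[k] N) : piH (eH w : Module.End k (M × N)) = w := by
  ext m; simp [piH, eH]

lemma eH_inj : Function.Injective (eH : (M →ₗ[k] N) →ₗ[k] Module.End k (M × N)) := by
  intro w w' h
  have := congrArg piH h
  rwa [piH_eH, piH_eH] at this

/-- block-diagonal embedding as ring hom -/
abbrev P : (Module.End k M × Module.End k N) →+* Module.End k (M × N) :=
  LinearMap.prodMapRingHom k M N

lemma P_mul_eH (a : Module.End k M × Module.End k N) (w : M →ₗ[k] N) :
    (P a : Module.End k (M × N)) * eH w = eH ((a.2 : N →ₗ[k] N) ∘ₗ w) := by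
  apply LinearMap.ext; intro x; simp [eH, Module.End.mul_apply]

lemma eH_mul_P (a : Module.End k M × Module.End k N) (w : M →ₗ[k] N) :
    (eH w : Module.End k (M × N)) * P a = eH (w ∘ₗ (a.1 : M →ₗ[k] M)) := by
  apply LinearMap.ext; intro x; simp [eH, Module.End.mul_apply]



variable {k A M N : Type*} [CommRing k] [Ring A] [Algebra k A]
  [AddCommGroup M] [Module k M] [AddCommGroup N] [Module k N]

noncomputable def Zps (ξ : ℕ → (A →ₗ[k] Module.End k M)) (η : ℕ → (A →ₗ[k] Module.End k N))
    (r : A) : PowerSeries (Module.End k M × Module.End k N) :=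
  PowerSeries.mk fun l => (ξ l r, η l r)

noncomputable def Wps (ψ : ℕ → Module.End k M) (θ : ℕ → Module.End k N) :
    PowerSeries (Module.End k M × Module.End k N) :=
  PowerSeries.mk fun l => (ψ l, θ l)

noncomputable def Fps (Φ : ℕ → (M →ₗ[k] N)) : PowerSeries (Module.End k (M × N)) :=
  PowerSeries.mk fun l => eH (Φ l)

variable (k M N) in
noncomputable abbrev Pm : PowerSeries (Module.End k M × Module.End k N) →+*
    PowerSeries (Module.End k (M × N)) :=
  PowerSeries.map (LinearMap.prodMapRingHom k M N)

lemma pair_mul_iff {T T' : Type*} [Ring T] [Ring T']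
    {x : ℕ → T} {y : ℕ → T'} {x' : ℕ → T} {y' : ℕ → T'} {x'' : ℕ → T} {y'' : ℕ → T'} :
    ((∀ l, x'' l = ∑ ij ∈ antidiagonal l, x ij.1 * x' ij.2) ∧
     (∀ l, y'' l = ∑ ij ∈ antidiagonal l, y ij.1 * y' ij.2)) ↔
    (PowerSeries.mk fun l => ((x'' l, y'' l) : T × T')) =
      (PowerSeries.mk fun l => ((x l, y l) : T × T')) * (PowerSeries.mk fun l => (x' l, y' l)) := by
  constructor
  · rintro ⟨h1, h2⟩
    apply PowerSeries.ext; intro l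
    rw [PowerSeries.coeff_mul]
    simp only [coeff_mk]
    refine Prod.ext ?_ ?_
    · simpa [Prod.fst_sum, Prod.fst_mul] using h1 l
    · simpa [Prod.snd_sum, Prod.snd_mul] using h2 l
  · intro h
    constructor <;> intro l
    · have := congrArg (fun f => (PowerSeries.coeff l f).1) h
      simp only [PowerSeries.coeff_mul, coeff_mk] at this
      simpa [Prod.fst_sum, Prod.fst_mul] using this
    · have := congrArg (fun f => (PowerSeries.coeff l f).2) h
      simp only [PowerSeries.coeff_mul, coeff_mk] at this
      simpa [Prod.snd_sum, Prod.snd_mul] using this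

lemma coeff_Fps_mul_Pm (Φ : ℕ → (M →ₗ[k] N)) (ψ : ℕ → Module.End k M)
    (θ : ℕ → Module.End k N) (l : ℕ) :
    PowerSeries.coeff l (Fps Φ * Pm k M N (Wps ψ θ)) =
      eH (∑ ij ∈ antidiagonal l, Φ ij.1 ∘ₗ (ψ ij.2 : M →ₗ[k] M)) := by
  rw [PowerSeries.coeff_mul, map_sum]
  refine Finset.sum_congr rfl fun ij _ => ?_
  rw [PowerSeries.coeff_map]
  simp only [Fps, Wps, coeff_mk]
  rw [eH_mul_P]

lemma coeff_Pm_mul_Fps (Φ : ℕ → (M →ₗ[k] N)) (ψ : ℕ → Module.End k M)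
    (θ : ℕ → Module.End k N) (l : ℕ) :
    PowerSeries.coeff l (Pm k M N (Wps ψ θ) * Fps Φ) =
      eH (∑ ij ∈ antidiagonal l, (θ ij.1 : N →ₗ[k] N) ∘ₗ Φ ij.2) := by
  rw [PowerSeries.coeff_mul, map_sum]
  refine Finset.sum_congr rfl fun ij _ => ?_
  rw [PowerSeries.coeff_map]
  simp only [Fps, Wps, coeff_mk]
  rw [P_mul_eH]

lemma phi_eq_iff (Φ' Φ : ℕ → (M →ₗ[k] N)) (ψ : ℕ → Module.End k M)
    (θ : ℕ → Module.End k N) :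
    (∀ l, ∑ ij ∈ antidiagonal l, Φ' ij.1 ∘ₗ (ψ ij.2 : M →ₗ[k] M) =
        ∑ ij ∈ antidiagonal l, (θ ij.1 : N →ₗ[k] N) ∘ₗ Φ ij.2) ↔
    Fps Φ' * Pm k M N (Wps ψ θ) = Pm k M N (Wps ψ θ) * Fps Φ := by
  constructor
  · intro h
    apply PowerSeries.ext; intro l
    rw [coeff_Fps_mul_Pm, coeff_Pm_mul_Fps, h l]
  · intro h l
    have := congrArg (PowerSeries.coeff l) h
    rw [coeff_Fps_mul_Pm, coeff_Pm_mul_Fps] at this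
    exact eH_inj this


variable {k A M N : Type*} [CommRing k] [Ring A] [Algebra k A]
  [AddCommGroup M] [Module k M] [AddCommGroup N] [Module k N]

lemma Wps_eta (f : PowerSeries (Module.End k M × Module.End k N)) :
    Wps (fun l => (PowerSeries.coeff l f).1) (fun l => (PowerSeries.coeff l f).2) = f := by
  apply PowerSeries.ext; intro l; simp [Wps]

lemma Wps_def (ψ : ℕ → Module.End k M) (θ : ℕ → Module.End k N) :
    Wps ψ θ = PowerSeries.mk fun l => ((ψ l, θ l) : Module.End k M × Module.End k N) := rfl

lemma map_monomial' {S T : Type*} [Ring S] [Ring T] (f : S →+* T) (n : ℕ) (a : S) :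
    PowerSeries.map f (PowerSeries.monomial n a) = PowerSeries.monomial n (f a) := by
  apply PowerSeries.ext; intro l
  rw [PowerSeries.coeff_map, PowerSeries.coeff_monomial, PowerSeries.coeff_monomial,
    apply_ite f, map_zero]


lemma coeff_Fps (Φ : ℕ → (M →ₗ[k] N)) (l : ℕ) :
    PowerSeries.coeff l (Fps Φ) = eH (Φ l) := by simp [Fps]

set_option maxHeartbeats 1600000 in
lemma step_lemma (ξ0 : A →ₐ[k] Module.End k M) (η0 : A →ₐ[k] Module.End k N)
    (φ : M →ₗ[k] N) (n : ℕ) (hn : 1 ≤ n)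
    (ξ : ℕ → (A →ₗ[k] Module.End k M)) (η : ℕ → (A →ₗ[k] Module.End k N))
    (Φ : ℕ → (M →ₗ[k] N)) (hdef : IsFormalDeformation ξ0 η0 φ ξ η Φ)
    (hzero : ∀ i, 1 ≤ i → i < n → ξ i = 0 ∧ η i = 0 ∧ Φ i = 0)
    (p : Module.End k M) (q : Module.End k N)
    (hp : ∀ a : A, ξ n a = ξ0 a * p - p * ξ0 a)
    (hq : ∀ a : A, η n a = η0 a * q - q * η0 a)
    (hw : Φ n = φ ∘ₗ (p : M →ₗ[k] M) - (q : N →ₗ[k] N) ∘ₗ φ) :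
    ∃ (ξ' : ℕ → (A →ₗ[k] Module.End k M)) (η' : ℕ → (A →ₗ[k] Module.End k N))
      (Φ' : ℕ → (M →ₗ[k] N)) (ψ : ℕ → Module.End k M) (θ : ℕ → Module.End k N),
      IsFormalDeformation ξ0 η0 φ ξ' η' Φ' ∧
      IsFormalIso ξ η Φ ξ' η' Φ' ψ θ ∧
      (∀ i, 1 ≤ i → i ≤ n → ξ' i = 0 ∧ η' i = 0 ∧ Φ' i = 0) ∧
      (∀ i, 1 ≤ i → i < n → ψ i = 0 ∧ θ i = 0) := by
  classical
  obtain ⟨hξ0, hη0, hΦ0, hξm, hηm, hφm⟩ := hdef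
  set x : Module.End k M × Module.End k N := (p, q) with hxdef
  set g : PowerSeries (Module.End k M × Module.End k N) :=
    1 + PowerSeries.monomial n x with hgdef
  have hg0 : PowerSeries.coeff 0 g = 1 := by
    rw [hgdef, map_add, PowerSeries.coeff_one, PowerSeries.coeff_monomial,
      if_pos rfl, if_neg (by omega), add_zero]
  obtain ⟨h, hgh, hhg, hh0⟩ := exists_inverse g hg0
  have hhrec : h = 1 - PowerSeries.monomial n x * h := by
    rw [eq_sub_iff_add_eq]
    calc h + PowerSeries.monomial n x * h = (1 + PowerSeries.monomial n x) * h := by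
          rw [add_mul, one_mul]
      _ = 1 := hgh
  have hZmul : ∀ r s : A, Zps ξ η (r * s) = Zps ξ η r * Zps ξ η s := fun r s =>
    pair_mul_iff.mp ⟨fun l => hξm l r s, fun l => hηm l r s⟩
  have hF : ∀ r : A, Fps Φ * Pm k M N (Zps ξ η r) = Pm k M N (Zps ξ η r) * Fps Φ := fun r =>
    (phi_eq_iff Φ Φ (fun l => ξ l r) (fun l => η l r)).mp (fun l => hφm l r)
  set Y : A → PowerSeries (Module.End k M × Module.End k N) :=
    fun r => g * Zps ξ η r * h with hYdef
  set Fp' : PowerSeries (Module.End k (M × N)) := Pm k M N g * Fps Φ * Pm k M N h with hFdef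
  have hZadd : ∀ r r' : A, Zps ξ η (r + r') = Zps ξ η r + Zps ξ η r' := by
    intro r r'
    apply PowerSeries.ext; intro l
    simp [Zps, Prod.mk_add_mk]
  have hZsmul : ∀ (c : k) (r : A), Zps ξ η (c • r) = c • Zps ξ η r := by
    intro c r
    apply PowerSeries.ext; intro l
    rw [PowerSeries.coeff_smul]
    simp [Zps, Prod.smul_mk]
  set ξ' : ℕ → (A →ₗ[k] Module.End k M) := fun l =>
    { toFun := fun r => (PowerSeries.coeff l (Y r)).1
      map_add' := fun r r' => by
        show (PowerSeries.coeff l (g * Zps ξ η (r + r') * h)).1 = _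
        rw [hZadd, mul_add, add_mul, map_add, Prod.fst_add]
      map_smul' := fun c r => by
        show (PowerSeries.coeff l (g * Zps ξ η (c • r) * h)).1 = _
        rw [hZsmul, mul_smul_comm, smul_mul_assoc, PowerSeries.coeff_smul, Prod.smul_fst]
        rfl } with hξ'def
  set η' : ℕ → (A →ₗ[k] Module.End k N) := fun l =>
    { toFun := fun r => (PowerSeries.coeff l (Y r)).2
      map_add' := fun r r' => by
        show (PowerSeries.coeff l (g * Zps ξ η (r + r') * h)).2 = _
        rw [hZadd, mul_add, add_mul, map_add, Prod.snd_add]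
      map_smul' := fun c r => by
        show (PowerSeries.coeff l (g * Zps ξ η (c • r) * h)).2 = _
        rw [hZsmul, mul_smul_comm, smul_mul_assoc, PowerSeries.coeff_smul, Prod.smul_snd]
        rfl } with hη'def
  set Φ' : ℕ → (M →ₗ[k] N) := fun l => piH (PowerSeries.coeff l Fp') with hΦ'def
  set ψ : ℕ → Module.End k M := fun l => (PowerSeries.coeff l g).1 with hψdef
  set θ : ℕ → Module.End k N := fun l => (PowerSeries.coeff l g).2 with hθdef
  have hξ'app : ∀ (i : ℕ) (r : A), ξ' i r = (PowerSeries.coeff i (Y r)).1 := fun _ _ => rfl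
  have hη'app : ∀ (i : ℕ) (r : A), η' i r = (PowerSeries.coeff i (Y r)).2 := fun _ _ => rfl
  have hψapp : ∀ i : ℕ, ψ i = (PowerSeries.coeff i g).1 := fun _ => rfl
  have hθapp : ∀ i : ℕ, θ i = (PowerSeries.coeff i g).2 := fun _ => rfl
  have hZapp : ∀ (l : ℕ) (r : A), PowerSeries.coeff l (Zps ξ η r) = (ξ l r, η l r) := by
    intro l r; simp [Zps]
  have cancel : ∀ z : PowerSeries (Module.End k M × Module.End k N), h * (g * z) = z := by
    intro z; rw [← mul_assoc, hhg, one_mul]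
  have hYmul : ∀ r s : A, Y (r * s) = Y r * Y s := by
    intro r s
    show g * Zps ξ η (r * s) * h = (g * Zps ξ η r * h) * (g * Zps ξ η s * h)
    rw [hZmul]
    simp only [mul_assoc, cancel]
  have hYeta : ∀ r : A, Wps (fun l => ξ' l r) (fun l => η' l r) = Y r := by
    intro r
    apply PowerSeries.ext; intro l
    simp only [Wps_def, PowerSeries.coeff_mk, hξ'app, hη'app]
  have hconj := fun (r : A) => conj_coeff n x (Zps ξ η r) h hhrec hh0
  have hYlow : ∀ (r : A) (l : ℕ), l < n →
      PowerSeries.coeff l (Y r) = (ξ l r, η l r) := by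
    intro r l hl
    show PowerSeries.coeff l (g * Zps ξ η r * h) = _
    rw [hgdef, (hconj r).1 l hl, hZapp]
  have hYn : ∀ r : A, PowerSeries.coeff n (Y r) = 0 := by
    intro r
    show PowerSeries.coeff n (g * Zps ξ η r * h) = 0
    rw [hgdef, (hconj r).2, hZapp, hZapp]
    have hx0 : ξ 0 r = ξ0 r := by rw [hξ0]; rfl
    have hy0 : η 0 r = η0 r := by rw [hη0]; rfl
    rw [hp r, hq r, hx0, hy0, hxdef]
    refine Prod.ext ?_ ?_
    · simp only [Prod.fst_add, Prod.fst_sub, Prod.fst_mul, Prod.fst_zero]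
      abel
    · simp only [Prod.snd_add, Prod.snd_sub, Prod.snd_mul, Prod.snd_zero]
      abel
  have hPmg : Pm k M N g = 1 +
      PowerSeries.monomial n (LinearMap.prodMapRingHom k M N x) := by
    rw [hgdef, map_add, map_one, map_monomial']
  have hPmh : Pm k M N h = 1 -
      PowerSeries.monomial n (LinearMap.prodMapRingHom k M N x) * Pm k M N h := by
    nth_rewrite 1 [hhrec]
    rw [map_sub, map_one, map_mul, map_monomial']
  have hPmh0 : PowerSeries.coeff 0 (Pm k M N h) = 1 := by
    rw [PowerSeries.coeff_map, hh0, map_one]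
  have hconjF := conj_coeff n (LinearMap.prodMapRingHom k M N x) (Fps Φ) (Pm k M N h)
    hPmh hPmh0
  have hFapp : ∀ l : ℕ, PowerSeries.coeff l (Fps Φ) = eH (Φ l) := by
    intro l; simp [Fps]
  have hFlow : ∀ l, l < n → PowerSeries.coeff l Fp' = eH (Φ l) := by
    intro l hl
    rw [hFdef, hPmg, hconjF.1 l hl, hFapp]
  have hFn : PowerSeries.coeff n Fp' = 0 := by
    rw [hFdef, hPmg, hconjF.2, hFapp, hFapp, hΦ0, P_mul_eH, eH_mul_P, hw]
    rw [map_sub]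
    simp only [hxdef]
    abel
  have hFrange : ∀ l, ∃ w, PowerSeries.coeff l Fp' = eH w := by
    have inner : ∀ j, ∃ w, PowerSeries.coeff j (Fps Φ * Pm k M N h) = eH w := by
      intro j
      have hthis := coeff_Fps_mul_Pm Φ (fun i => (PowerSeries.coeff i h).1)
        (fun i => (PowerSeries.coeff i h).2) j
      rw [Wps_eta] at hthis
      exact ⟨_, hthis⟩
    choose W hWit using inner
    intro l
    have hassoc : Fp' = Pm k M N g * (Fps Φ * Pm k M N h) := by rw [hFdef, mul_assoc]
    rw [hassoc, PowerSeries.coeff_mul]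
    refine ⟨∑ ij ∈ antidiagonal l, ((PowerSeries.coeff ij.1 g).2 : N →ₗ[k] N) ∘ₗ W ij.2, ?_⟩
    rw [map_sum]
    refine Finset.sum_congr rfl fun ij _ => ?_
    rw [PowerSeries.coeff_map, hWit, P_mul_eH]
  have hFΦ' : ∀ l, eH (Φ' l) = PowerSeries.coeff l Fp' := by
    intro l
    obtain ⟨w, hwl⟩ := hFrange l
    show eH (piH (PowerSeries.coeff l Fp')) = _
    rw [hwl, piH_eH]
  have hFpsΦ' : Fps Φ' = Fp' := by
    apply PowerSeries.ext; intro l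
    rw [coeff_Fps, hFΦ']
  have hPhg : Pm k M N h * Pm k M N g = 1 := by rw [← map_mul, hhg, map_one]
  have cancelE : ∀ z : PowerSeries (Module.End k (M × N)),
      Pm k M N h * (Pm k M N g * z) = z := by
    intro z; rw [← mul_assoc, hPhg, one_mul]
  refine ⟨ξ', η', Φ', ψ, θ, ?_, ?_, ?_, ?_⟩
  · -- IsFormalDeformation
    refine ⟨?_, ?_, ?_, ?_, ?_, ?_⟩
    · apply LinearMap.ext; intro r
      show (PowerSeries.coeff 0 (Y r)).1 = ξ0.toLinearMap r
      rw [hYlow r 0 (by omega)]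
      show ξ 0 r = _
      rw [hξ0]
    · apply LinearMap.ext; intro r
      show (PowerSeries.coeff 0 (Y r)).2 = η0.toLinearMap r
      rw [hYlow r 0 (by omega)]
      show η 0 r = _
      rw [hη0]
    · show piH (PowerSeries.coeff 0 Fp') = φ
      rw [hFlow 0 (by omega), piH_eH, hΦ0]
    · intro l r s
      have heq : (PowerSeries.mk fun i =>
            ((ξ' i (r * s), η' i (r * s)) : Module.End k M × Module.End k N)) =
          (PowerSeries.mk fun i => ((ξ' i r, η' i r) : Module.End k M × Module.End k N)) *
          (PowerSeries.mk fun i => ((ξ' i s, η' i s) : Module.End k M × Module.End k N)) := by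
        show Wps (fun i => ξ' i (r * s)) (fun i => η' i (r * s)) =
          Wps (fun i => ξ' i r) (fun i => η' i r) * Wps (fun i => ξ' i s) (fun i => η' i s)
        rw [hYeta, hYeta, hYeta, hYmul]
      exact (pair_mul_iff.mpr heq).1 l
    · intro l r s
      have heq : (PowerSeries.mk fun i =>
            ((ξ' i (r * s), η' i (r * s)) : Module.End k M × Module.End k N)) =
          (PowerSeries.mk fun i => ((ξ' i r, η' i r) : Module.End k M × Module.End k N)) *
          (PowerSeries.mk fun i => ((ξ' i s, η' i s) : Module.End k M × Module.End k N)) := by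
        show Wps (fun i => ξ' i (r * s)) (fun i => η' i (r * s)) =
          Wps (fun i => ξ' i r) (fun i => η' i r) * Wps (fun i => ξ' i s) (fun i => η' i s)
        rw [hYeta, hYeta, hYeta, hYmul]
      exact (pair_mul_iff.mpr heq).2 l
    · intro l r
      have hcomm : Fps Φ' * Pm k M N (Wps (fun i => ξ' i r) (fun i => η' i r)) =
          Pm k M N (Wps (fun i => ξ' i r) (fun i => η' i r)) * Fps Φ' := by
        rw [hYeta, hFpsΦ', hFdef]
        have hYE : Pm k M N (Y r) =
            Pm k M N g * Pm k M N (Zps ξ η r) * Pm k M N h := by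
          show Pm k M N (g * Zps ξ η r * h) = _
          rw [map_mul, map_mul]
        rw [hYE]
        have swap : Fps Φ * (Pm k M N (Zps ξ η r) * Pm k M N h) =
            Pm k M N (Zps ξ η r) * (Fps Φ * Pm k M N h) := by
          rw [← mul_assoc, hF r, mul_assoc]
        simp only [mul_assoc, cancelE, swap]
      exact (phi_eq_iff Φ' Φ' (fun i => ξ' i r) (fun i => η' i r)).mpr hcomm l
  · -- IsFormalIso
    have hiso1 : ∀ r : A, Y r * g = g * Zps ξ η r := by
      intro r
      show g * Zps ξ η r * h * g = _
      rw [mul_assoc (g * Zps ξ η r), hhg, mul_one]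
    refine ⟨?_, ?_, ?_, ?_, ?_⟩
    · show (PowerSeries.coeff 0 g).1 = 1
      rw [hg0]; rfl
    · show (PowerSeries.coeff 0 g).2 = 1
      rw [hg0]; rfl
    · intro l r
      have hc := congrArg (fun f => (PowerSeries.coeff l f).1) (hiso1 r)
      simp only [PowerSeries.coeff_mul, Prod.fst_sum, Prod.fst_mul] at hc
      simp only [hξ'app, hψapp, hZapp] at *
      convert hc using 2
    · intro l r
      have hc := congrArg (fun f => (PowerSeries.coeff l f).2) (hiso1 r)
      simp only [PowerSeries.coeff_mul, Prod.snd_sum, Prod.snd_mul] at hc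
      simp only [hη'app, hθapp, hZapp] at *
      convert hc using 2
    · intro l
      have hgeta : Wps ψ θ = g := Wps_eta g
      have hiso2 : Fps Φ' * Pm k M N (Wps ψ θ) = Pm k M N (Wps ψ θ) * Fps Φ := by
        rw [hgeta, hFpsΦ', hFdef,
          mul_assoc (Pm k M N g * Fps Φ) (Pm k M N h) (Pm k M N g), hPhg, mul_one]
      exact (phi_eq_iff Φ' Φ ψ θ).mpr hiso2 l
  · -- zeros up to n
    intro i h1 h2
    refine ⟨?_, ?_, ?_⟩
    · apply LinearMap.ext; intro r
      show (PowerSeries.coeff i (Y r)).1 = 0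
      rcases Nat.lt_or_ge i n with hin | hin
      · rw [hYlow r i hin]
        show ξ i r = 0
        rw [(hzero i h1 hin).1]; rfl
      · have hieq : i = n := by omega
        subst hieq
        rw [hYn r]; rfl
    · apply LinearMap.ext; intro r
      show (PowerSeries.coeff i (Y r)).2 = 0
      rcases Nat.lt_or_ge i n with hin | hin
      · rw [hYlow r i hin]
        show η i r = 0
        rw [(hzero i h1 hin).2.1]; rfl
      · have hieq : i = n := by omega
        subst hieq
        rw [hYn r]; rfl
    · show piH (PowerSeries.coeff i Fp') = 0
      rcases Nat.lt_or_ge i n with hin | hin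
      · rw [hFlow i hin, piH_eH, (hzero i h1 hin).2.2]
      · have hieq : i = n := by omega
        subst hieq
        rw [hFn]
        apply LinearMap.ext; intro m
        simp [piH]
  · -- gauge coefficients vanish below n
    intro i h1 h2
    have hgi : PowerSeries.coeff i g = 0 := by
      rw [hgdef, map_add, PowerSeries.coeff_one, PowerSeries.coeff_monomial,
        if_neg (by omega), if_neg (by omega), add_zero]
    constructor
    · show (PowerSeries.coeff i g).1 = 0
      rw [hgi]; rfl
    · show (PowerSeries.coeff i g).2 = 0
      rw [hgi]; rfl

lemma conv_pair_iff {T T' : Type*} [Ring T] [Ring T']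
    {x y x' y' : ℕ → T} {u v u' v' : ℕ → T'} :
    ((∀ l, ∑ ij ∈ antidiagonal l, x ij.1 * y ij.2 = ∑ ij ∈ antidiagonal l, x' ij.1 * y' ij.2) ∧
     (∀ l, ∑ ij ∈ antidiagonal l, u ij.1 * v ij.2 =
        ∑ ij ∈ antidiagonal l, u' ij.1 * v' ij.2)) ↔
    (PowerSeries.mk fun l => ((x l, u l) : T × T')) * (PowerSeries.mk fun l => (y l, v l)) =
      (PowerSeries.mk fun l => ((x' l, u' l) : T × T')) *
        (PowerSeries.mk fun l => (y' l, v' l)) := by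
  constructor
  · rintro ⟨h1, h2⟩
    apply PowerSeries.ext; intro l
    rw [PowerSeries.coeff_mul, PowerSeries.coeff_mul]
    simp only [coeff_mk]
    refine Prod.ext ?_ ?_
    · simpa [Prod.fst_sum, Prod.fst_mul] using h1 l
    · simpa [Prod.snd_sum, Prod.snd_mul] using h2 l
  · intro h
    constructor <;> intro l
    · have := congrArg (fun f => (PowerSeries.coeff l f).1) h
      simp only [PowerSeries.coeff_mul, coeff_mk] at this
      simpa [Prod.fst_sum, Prod.fst_mul] using this
    · have := congrArg (fun f => (PowerSeries.coeff l f).2) h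
      simp only [PowerSeries.coeff_mul, coeff_mk] at this
      simpa [Prod.snd_sum, Prod.snd_mul] using this

lemma iso_iff (ξ ξ' : ℕ → (A →ₗ[k] Module.End k M)) (η η' : ℕ → (A →ₗ[k] Module.End k N))
    (Φ Φ' : ℕ → (M →ₗ[k] N)) (ψ : ℕ → Module.End k M) (θ : ℕ → Module.End k N) :
    IsFormalIso ξ η Φ ξ' η' Φ' ψ θ ↔
    (ψ 0 = 1 ∧ θ 0 = 1 ∧
      (∀ r : A, Zps ξ' η' r * Wps ψ θ = Wps ψ θ * Zps ξ η r) ∧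
      Fps Φ' * Pm k M N (Wps ψ θ) = Pm k M N (Wps ψ θ) * Fps Φ) := by
  constructor
  · rintro ⟨h1, h2, h3, h4, h5⟩
    refine ⟨h1, h2, fun r => ?_, (phi_eq_iff Φ' Φ ψ θ).mp h5⟩
    exact conv_pair_iff.mp ⟨fun l => h3 l r, fun l => h4 l r⟩
  · rintro ⟨h1, h2, h3, h4⟩
    exact ⟨h1, h2, fun l r => (conv_pair_iff.mpr (h3 r)).1 l,
      fun l r => (conv_pair_iff.mpr (h3 r)).2 l, (phi_eq_iff Φ' Φ ψ θ).mpr h4 ⟩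

lemma Wps_trivial_one :
    Wps (trivialCoeffs (1 : Module.End k M)) (trivialCoeffs (1 : Module.End k N)) = 1 := by
  apply PowerSeries.ext; intro l
  rw [Wps_def, PowerSeries.coeff_mk, PowerSeries.coeff_one]
  by_cases hl : l = 0
  · subst hl; simp [trivialCoeffs, Prod.ext_iff]
  · simp [trivialCoeffs, hl, Prod.ext_iff]

lemma iso_refl (ξ : ℕ → (A →ₗ[k] Module.End k M)) (η : ℕ → (A →ₗ[k] Module.End k N))
    (Φ : ℕ → (M →ₗ[k] N)) :
    IsFormalIso ξ η Φ ξ η Φ (trivialCoeffs (1 : Module.End k M))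
      (trivialCoeffs (1 : Module.End k N)) := by
  rw [iso_iff]
  refine ⟨by simp [trivialCoeffs], by simp [trivialCoeffs], fun r => ?_, ?_⟩
  · rw [Wps_trivial_one, mul_one, one_mul]
  · rw [Wps_trivial_one, map_one, mul_one, one_mul]

lemma iso_comp {ξ ξ' ξ'' : ℕ → (A →ₗ[k] Module.End k M)}
    {η η' η'' : ℕ → (A →ₗ[k] Module.End k N)} {Φ Φ' Φ'' : ℕ → (M →ₗ[k] N)}
    {ψ ψ' : ℕ → Module.End k M} {θ θ' : ℕ → Module.End k N}
    (h1 : IsFormalIso ξ η Φ ξ' η' Φ' ψ θ)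
    (h2 : IsFormalIso ξ' η' Φ' ξ'' η'' Φ'' ψ' θ') :
    IsFormalIso ξ η Φ ξ'' η'' Φ''
      (fun l => ∑ ij ∈ antidiagonal l, ψ' ij.1 * ψ ij.2)
      (fun l => ∑ ij ∈ antidiagonal l, θ' ij.1 * θ ij.2) := by
  rw [iso_iff] at h1 h2 ⊢
  obtain ⟨ha1, ha2, ha3, ha4⟩ := h1
  obtain ⟨hb1, hb2, hb3, hb4⟩ := h2
  have hW : Wps (fun l => ∑ ij ∈ antidiagonal l, ψ' ij.1 * ψ ij.2)
      (fun l => ∑ ij ∈ antidiagonal l, θ' ij.1 * θ ij.2) = Wps ψ' θ' * Wps ψ θ := by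
    show (PowerSeries.mk fun l =>
        ((∑ ij ∈ antidiagonal l, ψ' ij.1 * ψ ij.2, ∑ ij ∈ antidiagonal l, θ' ij.1 * θ ij.2) :
          Module.End k M × Module.End k N)) = _
    exact pair_mul_iff.mp ⟨fun l => rfl, fun l => rfl⟩
  refine ⟨?_, ?_, fun r => ?_, ?_⟩
  · simp [ha1, hb1]
  · simp [ha2, hb2]
  · rw [hW, ← mul_assoc, hb3 r, mul_assoc, ha3 r, ← mul_assoc]
  · rw [hW, map_mul, ← mul_assoc, hb4, mul_assoc, ha4, ← mul_assoc]

structure DefState (k A M N : Type*) [CommRing k] [Ring A] [Algebra k A]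
    [AddCommGroup M] [Module k M] [AddCommGroup N] [Module k N] where
  xi : ℕ → (A →ₗ[k] Module.End k M)
  eta : ℕ → (A →ₗ[k] Module.End k N)
  phi : ℕ → (M →ₗ[k] N)
  psi : ℕ → Module.End k M
  theta : ℕ → Module.End k N

end DefAux
end DefAuxSec

/-- A non-trivial formal deformation of a module homomorphism `φ` is equivalent to a
deformation whose `n`-infinitesimal is not a coboundary, for some `n ≥ 1`. -/
theorem nontrivial_equivalent_nInfinitesimal_not_coboundary (ξ0 : A →ₐ[k] Module.End k M)
    (η0 : A →ₐ[k] Module.End k N) (φ : M →ₗ[k] N)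
    (ξ : ℕ → (A →ₗ[k] Module.End k M)) (η : ℕ → (A →ₗ[k] Module.End k N))
    (Φ : ℕ → (M →ₗ[k] N)) (hdef : IsFormalDeformation ξ0 η0 φ ξ η Φ)
    (hnontrivial : ¬∃ (ψ : ℕ → Module.End k M) (θ : ℕ → Module.End k N),
      IsFormalIso ξ η Φ (trivialCoeffs ξ0.toLinearMap) (trivialCoeffs η0.toLinearMap)
        (trivialCoeffs φ) ψ θ) :
    ∃ (n : ℕ) (ξ' : ℕ → (A →ₗ[k] Module.End k M)) (η' : ℕ → (A →ₗ[k] Module.End k N))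
        (Φ' : ℕ → (M →ₗ[k] N)) (ψ : ℕ → Module.End k M) (θ : ℕ → Module.End k N),
      1 ≤ n ∧ IsFormalDeformation ξ0 η0 φ ξ' η' Φ' ∧
      IsFormalIso ξ η Φ ξ' η' Φ' ψ θ ∧
      (∀ i, 1 ≤ i → i < n → ξ' i = 0 ∧ η' i = 0 ∧ Φ' i = 0) ∧
      ¬∃ (p : Module.End k M) (q : Module.End k N),
        (∀ a : A, ξ' n a = ξ0 a * p - p * ξ0 a) ∧
        (∀ a : A, η' n a = η0 a * q - q * η0 a) ∧
        (Φ' n = φ ∘ₗ (p : M →ₗ[k] M) - (q : N →ₗ[k] N) ∘ₗ φ) := by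
  classical
  by_contra hcon
  push_neg at hcon
  apply hnontrivial
  set Good : ℕ → DefAux.DefState k A M N → Prop := fun m s =>
    IsFormalDeformation ξ0 η0 φ s.xi s.eta s.phi ∧
    IsFormalIso ξ η Φ s.xi s.eta s.phi s.psi s.theta ∧
    ∀ i, 1 ≤ i → i ≤ m → s.xi i = 0 ∧ s.eta i = 0 ∧ s.phi i = 0 with hGood
  have hstep : ∀ (m : ℕ) (s : DefAux.DefState k A M N), Good m s →
      ∃ s' : DefAux.DefState k A M N, Good (m+1) s' ∧
        ∀ l, l ≤ m → s'.psi l = s.psi l ∧ s'.theta l = s.theta l := by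
    intro m s hs
    obtain ⟨hd, hi, hz⟩ := hs
    obtain ⟨p, q, hp, hq, hwp⟩ := hcon (m+1) s.xi s.eta s.phi s.psi s.theta (by omega) hd hi
      (fun i hi1 hi2 => hz i hi1 (by omega))
    obtain ⟨ξ'', η'', Φ'', ψ', θ', hd', hi', hz', hgz'⟩ :=
      DefAux.step_lemma ξ0 η0 φ (m+1) (by omega) s.xi s.eta s.phi hd
        (fun i hi1 hi2 => hz i hi1 (by omega)) p q hp hq hwp
    refine ⟨⟨ξ'', η'', Φ'', fun l => ∑ ij ∈ antidiagonal l, ψ' ij.1 * s.psi ij.2,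
        fun l => ∑ ij ∈ antidiagonal l, θ' ij.1 * s.theta ij.2⟩, ⟨hd', ?_, ?_⟩, ?_⟩
    · exact DefAux.iso_comp hi hi'
    · exact hz'
    · intro l hl
      constructor
      · exact DefAux.conv_id_left hi'.1 m l
          (fun i hi1 hi2 => (hgz' i hi1 (by omega)).1) hl
      · exact DefAux.conv_id_left hi'.2.1 m l
          (fun i hi1 hi2 => (hgz' i hi1 (by omega)).2) hl
  have hGood0 : Good 0 (⟨ξ, η, Φ, trivialCoeffs (1 : Module.End k M),
      trivialCoeffs (1 : Module.End k N)⟩ : DefAux.DefState k A M N) := by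
    refine ⟨hdef, DefAux.iso_refl ξ η Φ, ?_⟩
    intro i hi1 hi2; omega
  let F : ∀ m : ℕ, {s : DefAux.DefState k A M N // Good m s} →
      {s : DefAux.DefState k A M N // Good (m+1) s} := fun m s =>
    ⟨(hstep m s.1 s.2).choose, (hstep m s.1 s.2).choose_spec.1⟩
  let seq : ∀ m : ℕ, {s : DefAux.DefState k A M N // Good m s} := fun m =>
    Nat.rec ⟨_, hGood0⟩ F m
  have hseqsucc : ∀ m, seq (m+1) = F m (seq m) := fun m => rfl
  have hstab : ∀ m l, l ≤ m → (seq (m+1)).1.psi l = (seq m).1.psi l ∧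
      (seq (m+1)).1.theta l = (seq m).1.theta l := by
    intro m l hl
    have := (hstep m (seq m).1 (seq m).2).choose_spec.2 l hl
    rw [hseqsucc m]
    exact this
  have hmono : ∀ l m, l ≤ m → (seq m).1.psi l = (seq l).1.psi l ∧
      (seq m).1.theta l = (seq l).1.theta l := by
    intro l m hm
    induction m, hm using Nat.le_induction with
    | base => exact ⟨rfl, rfl⟩
    | succ m' hm' ih =>
        obtain ⟨h1, h2⟩ := hstab m' l (by omega)
        exact ⟨h1.trans ih.1, h2.trans ih.2⟩
  refine ⟨fun l => (seq l).1.psi l, fun l => (seq l).1.theta l, ?_, ?_, ?_, ?_, ?_⟩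
  · show (seq 0).1.psi 0 = 1
    show trivialCoeffs (1 : Module.End k M) 0 = 1
    simp [trivialCoeffs]
  · show (seq 0).1.theta 0 = 1
    show trivialCoeffs (1 : Module.End k N) 0 = 1
    simp [trivialCoeffs]
  · intro l r
    obtain ⟨hd, hi, hz⟩ := (seq l).2
    calc ∑ ij ∈ antidiagonal l, trivialCoeffs ξ0.toLinearMap ij.1 r * (seq ij.2).1.psi ij.2
        = ∑ ij ∈ antidiagonal l, (seq l).1.xi ij.1 r * (seq l).1.psi ij.2 := by
          refine Finset.sum_congr rfl fun ij hij => ?_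
          have hij1 := Finset.HasAntidiagonal.antidiagonal.fst_le hij
          have hij2 := Finset.HasAntidiagonal.antidiagonal.snd_le hij
          congr 1
          · rcases Nat.eq_zero_or_pos ij.1 with hz1 | hz1
            · rw [hz1]
              show ξ0.toLinearMap r = (seq l).1.xi 0 r
              rw [hd.1]
            · show trivialCoeffs ξ0.toLinearMap ij.1 r = _
              rw [show trivialCoeffs ξ0.toLinearMap ij.1 = 0 by
                  simp [trivialCoeffs]; omega,
                (hz ij.1 (by omega) hij1).1]
          · exact ((hmono ij.2 l hij2).1).symm
      _ = ∑ ij ∈ antidiagonal l, (seq l).1.psi ij.1 * ξ ij.2 r := hi.2.2.1 l r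
      _ = ∑ ij ∈ antidiagonal l, (seq ij.1).1.psi ij.1 * ξ ij.2 r := by
          refine Finset.sum_congr rfl fun ij hij => ?_
          rw [(hmono ij.1 l (Finset.HasAntidiagonal.antidiagonal.fst_le hij)).1]
  · intro l r
    obtain ⟨hd, hi, hz⟩ := (seq l).2
    calc ∑ ij ∈ antidiagonal l, trivialCoeffs η0.toLinearMap ij.1 r * (seq ij.2).1.theta ij.2
        = ∑ ij ∈ antidiagonal l, (seq l).1.eta ij.1 r * (seq l).1.theta ij.2 := by
          refine Finset.sum_congr rfl fun ij hij => ?_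
          have hij1 := Finset.HasAntidiagonal.antidiagonal.fst_le hij
          have hij2 := Finset.HasAntidiagonal.antidiagonal.snd_le hij
          congr 1
          · rcases Nat.eq_zero_or_pos ij.1 with hz1 | hz1
            · rw [hz1]
              show η0.toLinearMap r = (seq l).1.eta 0 r
              rw [hd.2.1]
            · show trivialCoeffs η0.toLinearMap ij.1 r = _
              rw [show trivialCoeffs η0.toLinearMap ij.1 = 0 by
                  simp [trivialCoeffs]; omega,
                (hz ij.1 (by omega) hij1).2.1]
          · exact ((hmono ij.2 l hij2).2).symm
      _ = ∑ ij ∈ antidiagonal l, (seq l).1.theta ij.1 * η ij.2 r := hi.2.2.2.1 l r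
      _ = ∑ ij ∈ antidiagonal l, (seq ij.1).1.theta ij.1 * η ij.2 r := by
          refine Finset.sum_congr rfl fun ij hij => ?_
          rw [(hmono ij.1 l (Finset.HasAntidiagonal.antidiagonal.fst_le hij)).2]
  · intro l
    obtain ⟨hd, hi, hz⟩ := (seq l).2
    calc ∑ ij ∈ antidiagonal l, trivialCoeffs φ ij.1 ∘ₗ ((seq ij.2).1.psi ij.2 : M →ₗ[k] M)
        = ∑ ij ∈ antidiagonal l, (seq l).1.phi ij.1 ∘ₗ ((seq l).1.psi ij.2 : M →ₗ[k] M) := by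
          refine Finset.sum_congr rfl fun ij hij => ?_
          have hij1 := Finset.HasAntidiagonal.antidiagonal.fst_le hij
          have hij2 := Finset.HasAntidiagonal.antidiagonal.snd_le hij
          rw [(hmono ij.2 l hij2).1]
          congr 1
          rcases Nat.eq_zero_or_pos ij.1 with hz1 | hz1
          · rw [hz1]
            show trivialCoeffs φ 0 = _
            rw [hd.2.2.1]
            simp [trivialCoeffs]
          · rw [show trivialCoeffs φ ij.1 = 0 by simp [trivialCoeffs]; omega,
              (hz ij.1 (by omega) hij1).2.2]
      _ = ∑ ij ∈ antidiagonal l, ((seq l).1.theta ij.1 : N →ₗ[k] N) ∘ₗ Φ ij.2 :=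
          hi.2.2.2.2 l
      _ = ∑ ij ∈ antidiagonal l, ((seq ij.1).1.theta ij.1 : N →ₗ[k] N) ∘ₗ Φ ij.2 := by
          refine Finset.sum_congr rfl fun ij hij => ?_
          rw [(hmono ij.1 l (Finset.HasAntidiagonal.antidiagonal.fst_le hij)).2]
end

section
/- If the first deformation cohomology H^1(φ) of a module homomorphism φ: M → N vanishes, then φ is rigid: every formal one-parameter deformation of φ is equivalent to the trivial deformation. -/
open Finset

variable {k A M N : Type*} [CommRing k] [Ring A] [Algebra k A]
  [AddCommGroup M] [Module k M] [AddCommGroup N] [Module k N]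

/-! ### Auxiliary material for the rigidity theorem -/

/-- Reindexing a double antidiagonal sum ("associativity of Cauchy products"). -/
theorem sum_antidiagonal_assoc {α : Type*} [AddCommMonoid α] (F : ℕ → ℕ → ℕ → α) (n : ℕ) :
    ∑ ij ∈ antidiagonal n, ∑ pq ∈ antidiagonal ij.1, F pq.1 pq.2 ij.2 =
    ∑ ij ∈ antidiagonal n, ∑ pq ∈ antidiagonal ij.2, F ij.1 pq.1 pq.2 := by
  rw [Finset.sum_sigma', Finset.sum_sigma']
  refine Finset.sum_nbij'
    (fun (x : (_ : ℕ × ℕ) × ℕ × ℕ) =>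
      (⟨(x.2.1, x.2.2 + x.1.2), (x.2.2, x.1.2)⟩ : (_ : ℕ × ℕ) × ℕ × ℕ))
    (fun (x : (_ : ℕ × ℕ) × ℕ × ℕ) =>
      (⟨(x.1.1 + x.2.1, x.2.2), (x.1.1, x.2.1)⟩ : (_ : ℕ × ℕ) × ℕ × ℕ)) ?_ ?_ ?_ ?_ ?_
  · rintro ⟨⟨i, j⟩, ⟨p, q⟩⟩ hx
    simp only [Finset.mem_sigma, Finset.HasAntidiagonal.mem_antidiagonal] at hx ⊢
    exact ⟨by omega, trivial⟩
  · rintro ⟨⟨i, j⟩, ⟨p, q⟩⟩ hx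
    simp only [Finset.mem_sigma, Finset.HasAntidiagonal.mem_antidiagonal] at hx ⊢
    exact ⟨by omega, trivial⟩
  · rintro ⟨⟨i, j⟩, ⟨p, q⟩⟩ hx
    simp only [Finset.mem_sigma, Finset.HasAntidiagonal.mem_antidiagonal] at hx
    obtain ⟨h1, h2⟩ := hx
    subst h2
    rfl
  · rintro ⟨⟨i, j⟩, ⟨p, q⟩⟩ hx
    simp only [Finset.mem_sigma, Finset.HasAntidiagonal.mem_antidiagonal] at hx
    obtain ⟨h1, h2⟩ := hx
    subst h2
    rfl
  · rintro ⟨⟨i, j⟩, ⟨p, q⟩⟩ _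
    rfl

theorem sum_comp_linear {P Q R : Type*} [AddCommGroup P] [Module k P] [AddCommGroup Q]
    [Module k Q] [AddCommGroup R] [Module k R] {ι : Type*} (s : Finset ι)
    (f : ι → (Q →ₗ[k] R)) (g : P →ₗ[k] Q) :
    (∑ i ∈ s, f i) ∘ₗ g = ∑ i ∈ s, f i ∘ₗ g := by
  ext x; simp [LinearMap.sum_apply]

theorem comp_sum_linear {P Q R : Type*} [AddCommGroup P] [Module k P] [AddCommGroup Q]
    [Module k Q] [AddCommGroup R] [Module k R] {ι : Type*} (s : Finset ι)
    (f : Q →ₗ[k] R) (g : ι → (P →ₗ[k] Q)) :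
    f ∘ₗ (∑ i ∈ s, g i) = ∑ i ∈ s, f ∘ₗ g i := by
  ext x; simp [LinearMap.sum_apply]

/-- The coboundary existence predicate (the image of `δ⁰` hitting `(u,v,w)`). -/
def CobEx (ξ0 : A →ₐ[k] Module.End k M) (η0 : A →ₐ[k] Module.End k N) (φ : M →ₗ[k] N)
    (u : A →ₗ[k] Module.End k M) (v : A →ₗ[k] Module.End k N) (w : M →ₗ[k] N) : Prop :=
  ∃ (p : Module.End k M) (q : Module.End k N),
    (∀ a : A, u a = ξ0 a * p - p * ξ0 a) ∧
    (∀ a : A, v a = η0 a * q - q * η0 a) ∧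
    (w = φ ∘ₗ (p : M →ₗ[k] M) - (q : N →ₗ[k] N) ∘ₗ φ)

open Classical in
/-- A choice of primitive `(p, q)` for a coboundary, `(0,0)` otherwise. -/
noncomputable def pickPQ (ξ0 : A →ₐ[k] Module.End k M) (η0 : A →ₐ[k] Module.End k N)
    (φ : M →ₗ[k] N) (u : A →ₗ[k] Module.End k M) (v : A →ₗ[k] Module.End k N)
    (w : M →ₗ[k] N) : Module.End k M × Module.End k N :=
  if h : CobEx ξ0 η0 φ u v w then (h.choose, h.choose_spec.choose) else (0, 0)

theorem pickPQ_spec {ξ0 : A →ₐ[k] Module.End k M} {η0 : A →ₐ[k] Module.End k N}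
    {φ : M →ₗ[k] N} {u : A →ₗ[k] Module.End k M} {v : A →ₗ[k] Module.End k N}
    {w : M →ₗ[k] N} (h : CobEx ξ0 η0 φ u v w) :
    (∀ a : A, u a = ξ0 a * (pickPQ ξ0 η0 φ u v w).1 - (pickPQ ξ0 η0 φ u v w).1 * ξ0 a) ∧
    (∀ a : A, v a = η0 a * (pickPQ ξ0 η0 φ u v w).2 - (pickPQ ξ0 η0 φ u v w).2 * η0 a) ∧
    (w = φ ∘ₗ ((pickPQ ξ0 η0 φ u v w).1 : M →ₗ[k] M) -
      ((pickPQ ξ0 η0 φ u v w).2 : N →ₗ[k] N) ∘ₗ φ) := by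
  classical
  simp only [pickPQ, dif_pos h]
  exact h.choose_spec.choose_spec

/-- `u`-component of the obstruction at order `n+1`, built from `ψ₀,…,ψₙ`. -/
noncomputable def stepU (ξ : ℕ → (A →ₗ[k] Module.End k M)) (prev : ℕ → Module.End k M)
    (n : ℕ) : A →ₗ[k] Module.End k M :=
  ∑ ij ∈ antidiagonal n, (LinearMap.mulLeft k (prev ij.1)).comp (ξ (ij.2 + 1))

noncomputable def stepV (η : ℕ → (A →ₗ[k] Module.End k N)) (prev : ℕ → Module.End k N)
    (n : ℕ) : A →ₗ[k] Module.End k N :=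
  ∑ ij ∈ antidiagonal n, (LinearMap.mulLeft k (prev ij.1)).comp (η (ij.2 + 1))

noncomputable def stepW (Φ : ℕ → (M →ₗ[k] N)) (prev : ℕ → Module.End k N)
    (n : ℕ) : M →ₗ[k] N :=
  ∑ ij ∈ antidiagonal n, (prev ij.1 : N →ₗ[k] N) ∘ₗ Φ (ij.2 + 1)

theorem stepU_apply (ξ : ℕ → (A →ₗ[k] Module.End k M)) (prev : ℕ → Module.End k M)
    (n : ℕ) (a : A) :
    stepU ξ prev n a = ∑ ij ∈ antidiagonal n, prev ij.1 * ξ (ij.2 + 1) a := by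
  simp [stepU, LinearMap.sum_apply]

theorem stepV_apply (η : ℕ → (A →ₗ[k] Module.End k N)) (prev : ℕ → Module.End k N)
    (n : ℕ) (a : A) :
    stepV η prev n a = ∑ ij ∈ antidiagonal n, prev ij.1 * η (ij.2 + 1) a := by
  simp [stepV, LinearMap.sum_apply]

theorem stepU_congr (ξ : ℕ → (A →ₗ[k] Module.End k M)) {p p' : ℕ → Module.End k M}
    (n : ℕ) (h : ∀ i ≤ n, p i = p' i) : stepU ξ p n = stepU ξ p' n :=
  Finset.sum_congr rfl fun ij hij => by
    rw [h ij.1 (by have := mem_antidiagonal.mp hij; omega)]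

theorem stepV_congr (η : ℕ → (A →ₗ[k] Module.End k N)) {p p' : ℕ → Module.End k N}
    (n : ℕ) (h : ∀ i ≤ n, p i = p' i) : stepV η p n = stepV η p' n :=
  Finset.sum_congr rfl fun ij hij => by
    rw [h ij.1 (by have := mem_antidiagonal.mp hij; omega)]

theorem stepW_congr (Φ : ℕ → (M →ₗ[k] N)) {p p' : ℕ → Module.End k N}
    (n : ℕ) (h : ∀ i ≤ n, p i = p' i) : stepW Φ p n = stepW Φ p' n :=
  Finset.sum_congr rfl fun ij hij => by
    rw [h ij.1 (by have := mem_antidiagonal.mp hij; omega)]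

/-- The recursive construction: `seqPT … n` is the sequence `(ψᵢ, θᵢ)` after `n` steps. -/
noncomputable def seqPT (ξ0 : A →ₐ[k] Module.End k M) (η0 : A →ₐ[k] Module.End k N)
    (φ : M →ₗ[k] N) (ξ : ℕ → (A →ₗ[k] Module.End k M)) (η : ℕ → (A →ₗ[k] Module.End k N))
    (Φ : ℕ → (M →ₗ[k] N)) : ℕ → ℕ → Module.End k M × Module.End k N
  | 0 => fun m => if m = 0 then (1, 1) else 0
  | (n + 1) => fun m =>
      if m = n + 1 then
        pickPQ ξ0 η0 φ (stepU ξ (fun i => (seqPT ξ0 η0 φ ξ η Φ n i).1) n)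
          (stepV η (fun i => (seqPT ξ0 η0 φ ξ η Φ n i).2) n)
          (stepW Φ (fun i => (seqPT ξ0 η0 φ ξ η Φ n i).2) n)
      else seqPT ξ0 η0 φ ξ η Φ n m

/-- The sequence `(ψ_l, θ_l)` itself. -/
noncomputable def PT (ξ0 : A →ₐ[k] Module.End k M) (η0 : A →ₐ[k] Module.End k N)
    (φ : M →ₗ[k] N) (ξ : ℕ → (A →ₗ[k] Module.End k M)) (η : ℕ → (A →ₗ[k] Module.End k N))
    (Φ : ℕ → (M →ₗ[k] N)) (l : ℕ) : Module.End k M × Module.End k N :=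
  seqPT ξ0 η0 φ ξ η Φ l l

theorem seqPT_stable (ξ0 : A →ₐ[k] Module.End k M) (η0 : A →ₐ[k] Module.End k N)
    (φ : M →ₗ[k] N) (ξ : ℕ → (A →ₗ[k] Module.End k M)) (η : ℕ → (A →ₗ[k] Module.End k N))
    (Φ : ℕ → (M →ₗ[k] N)) : ∀ n m, m ≤ n → seqPT ξ0 η0 φ ξ η Φ n m = PT ξ0 η0 φ ξ η Φ m := by
  intro n
  induction n with
  | zero => intro m hm; interval_cases m; rfl
  | succ n ih =>
    intro m hm
    rcases eq_or_lt_of_le hm with h | h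
    · rw [h]; rfl
    · have hm' : m ≤ n := Nat.lt_succ_iff.mp h
      rw [show seqPT ξ0 η0 φ ξ η Φ (n + 1) m = seqPT ξ0 η0 φ ξ η Φ n m from
        if_neg (by omega), ih m hm']

theorem PT_zero (ξ0 : A →ₐ[k] Module.End k M) (η0 : A →ₐ[k] Module.End k N)
    (φ : M →ₗ[k] N) (ξ : ℕ → (A →ₗ[k] Module.End k M)) (η : ℕ → (A →ₗ[k] Module.End k N))
    (Φ : ℕ → (M →ₗ[k] N)) : PT ξ0 η0 φ ξ η Φ 0 = (1, 1) := rfl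

theorem PT_succ (ξ0 : A →ₐ[k] Module.End k M) (η0 : A →ₐ[k] Module.End k N)
    (φ : M →ₗ[k] N) (ξ : ℕ → (A →ₗ[k] Module.End k M)) (η : ℕ → (A →ₗ[k] Module.End k N))
    (Φ : ℕ → (M →ₗ[k] N)) (n : ℕ) :
    PT ξ0 η0 φ ξ η Φ (n + 1) =
      pickPQ ξ0 η0 φ (stepU ξ (fun i => (PT ξ0 η0 φ ξ η Φ i).1) n)
        (stepV η (fun i => (PT ξ0 η0 φ ξ η Φ i).2) n)
        (stepW Φ (fun i => (PT ξ0 η0 φ ξ η Φ i).2) n) := by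
  have h : PT ξ0 η0 φ ξ η Φ (n + 1) =
      pickPQ ξ0 η0 φ (stepU ξ (fun i => (seqPT ξ0 η0 φ ξ η Φ n i).1) n)
        (stepV η (fun i => (seqPT ξ0 η0 φ ξ η Φ n i).2) n)
        (stepW Φ (fun i => (seqPT ξ0 η0 φ ξ η Φ n i).2) n) := if_pos rfl
  rw [h, stepU_congr ξ n (fun i hi => by rw [seqPT_stable ξ0 η0 φ ξ η Φ n i hi]),
    stepV_congr η n (fun i hi => by rw [seqPT_stable ξ0 η0 φ ξ η Φ n i hi]),
    stepW_congr Φ n (fun i hi => by rw [seqPT_stable ξ0 η0 φ ξ η Φ n i hi])]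

/-- If `H¹(φ) = 0` (every 1-cocycle of the deformation complex of `φ` is a coboundary
`(δ⁰p, δ⁰q, φp - qφ)`), then `φ` is rigid: every formal one-parameter deformation of `φ`
is equivalent to the trivial deformation `(ξ₀, η₀, φ)`. -/
theorem rigid_of_H1_eq_zero (ξ0 : A →ₐ[k] Module.End k M)
    (η0 : A →ₐ[k] Module.End k N) (φ : M →ₗ[k] N)
    (h1 : ∀ (u : A →ₗ[k] Module.End k M) (v : A →ₗ[k] Module.End k N) (w : M →ₗ[k] N),
      IsOneCocycle ξ0 η0 φ u v w →
      ∃ (p : Module.End k M) (q : Module.End k N),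
        (∀ a : A, u a = ξ0 a * p - p * ξ0 a) ∧
        (∀ a : A, v a = η0 a * q - q * η0 a) ∧
        (w = φ ∘ₗ (p : M →ₗ[k] M) - (q : N →ₗ[k] N) ∘ₗ φ)) :
    ∀ (ξ : ℕ → (A →ₗ[k] Module.End k M)) (η : ℕ → (A →ₗ[k] Module.End k N))
        (Φ : ℕ → (M →ₗ[k] N)), IsFormalDeformation ξ0 η0 φ ξ η Φ →
      ∃ (ψ : ℕ → Module.End k M) (θ : ℕ → Module.End k N),
        IsFormalIso ξ η Φ (trivialCoeffs ξ0.toLinearMap) (trivialCoeffs η0.toLinearMap)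
          (trivialCoeffs φ) ψ θ := by
  intro ξ η Φ hdef
  obtain ⟨hξ0, hη0, hΦ0, hξ, hη, hφ⟩ := hdef
  set ψ : ℕ → Module.End k M := fun l => (PT ξ0 η0 φ ξ η Φ l).1 with hψdef
  set θ : ℕ → Module.End k N := fun l => (PT ξ0 η0 φ ξ η Φ l).2 with hθdef
  have hξ0' : ∀ a : A, ξ 0 a = ξ0 a := fun a => by rw [hξ0]; rfl
  have hη0' : ∀ a : A, η 0 a = η0 a := fun a => by rw [hη0]; rfl
  have main : ∀ l : ℕ,
      (∀ r : A, ξ0 r * ψ l = ∑ ij ∈ antidiagonal l, ψ ij.1 * ξ ij.2 r) ∧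
      (∀ r : A, η0 r * θ l = ∑ ij ∈ antidiagonal l, θ ij.1 * η ij.2 r) ∧
      (φ ∘ₗ (ψ l : M →ₗ[k] M) = ∑ ij ∈ antidiagonal l, (θ ij.1 : N →ₗ[k] N) ∘ₗ Φ ij.2) := by
    intro l
    induction l using Nat.strong_induction_on with
    | _ l IH =>
      cases l with
      | zero =>
        refine ⟨fun r => ?_, fun r => ?_, ?_⟩
        · simp [hψdef, PT_zero, hξ0']
        · simp [hθdef, PT_zero, hη0']
        · simp [hψdef, hθdef, PT_zero, hΦ0, Module.End.one_eq_id]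
      | succ n =>
        set u := stepU ξ ψ n with hudef
        set v := stepV η θ n with hvdef
        set w := stepW Φ θ n with hwdef
        have hua : ∀ a : A, u a = ∑ ij ∈ antidiagonal n, ψ ij.1 * ξ (ij.2 + 1) a :=
          stepU_apply ξ ψ n
        have hva : ∀ a : A, v a = ∑ ij ∈ antidiagonal n, θ ij.1 * η (ij.2 + 1) a :=
          stepV_apply η θ n
        have IH1 : ∀ i ≤ n, ∀ r : A,
            ξ0 r * ψ i = ∑ pq ∈ antidiagonal i, ψ pq.1 * ξ pq.2 r :=
          fun i hi => (IH i (Nat.lt_succ_of_le hi)).1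
        have IH2 : ∀ i ≤ n, ∀ r : A,
            η0 r * θ i = ∑ pq ∈ antidiagonal i, θ pq.1 * η pq.2 r :=
          fun i hi => (IH i (Nat.lt_succ_of_le hi)).2.1
        have IH3 : ∀ i ≤ n, φ ∘ₗ (ψ i : M →ₗ[k] M) =
            ∑ pq ∈ antidiagonal i, (θ pq.1 : N →ₗ[k] N) ∘ₗ Φ pq.2 :=
          fun i hi => (IH i (Nat.lt_succ_of_le hi)).2.2
        -- cocycle condition for u
        have cc1 : ∀ a b : A, ξ0 a * u b - u (a * b) + u a * ξ0 b = 0 := by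
          intro a b
          have e1 : ξ0 a * u b = ∑ ij ∈ antidiagonal n, ∑ pq ∈ antidiagonal ij.1,
              ψ pq.1 * (ξ pq.2 a * ξ (ij.2 + 1) b) := by
            rw [hua b, Finset.mul_sum]
            refine Finset.sum_congr rfl fun ij hij => ?_
            have hle : ij.1 ≤ n := by have := mem_antidiagonal.mp hij; omega
            rw [← mul_assoc, IH1 ij.1 hle a, Finset.sum_mul]
            exact Finset.sum_congr rfl fun pq _ => by rw [mul_assoc]
          have e1' : ξ0 a * u b = ∑ ij ∈ antidiagonal n, ∑ pq ∈ antidiagonal ij.2,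
              ψ ij.1 * (ξ pq.1 a * ξ (pq.2 + 1) b) :=
            e1.trans (sum_antidiagonal_assoc (fun p q j => ψ p * (ξ q a * ξ (j + 1) b)) n)
          have e2 : u a * ξ0 b = ∑ ij ∈ antidiagonal n,
              ψ ij.1 * (ξ (ij.2 + 1) a * ξ 0 b) := by
            rw [hua a, Finset.sum_mul]
            exact Finset.sum_congr rfl fun ij _ => by rw [mul_assoc, hξ0' b]
          have e3 : u (a * b) = ∑ ij ∈ antidiagonal n,
              (ψ ij.1 * (ξ (ij.2 + 1) a * ξ 0 b) +
                ∑ pq ∈ antidiagonal ij.2, ψ ij.1 * (ξ pq.1 a * ξ (pq.2 + 1) b)) := by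
            rw [hua (a * b)]
            refine Finset.sum_congr rfl fun ij _ => ?_
            rw [hξ (ij.2 + 1) a b, Finset.Nat.sum_antidiagonal_succ', mul_add,
              Finset.mul_sum]
          rw [e1', e2, e3, Finset.sum_add_distrib]
          abel
        -- cocycle condition for v
        have cc2 : ∀ a b : A, η0 a * v b - v (a * b) + v a * η0 b = 0 := by
          intro a b
          have e1 : η0 a * v b = ∑ ij ∈ antidiagonal n, ∑ pq ∈ antidiagonal ij.1,
              θ pq.1 * (η pq.2 a * η (ij.2 + 1) b) := by
            rw [hva b, Finset.mul_sum]
            refine Finset.sum_congr rfl fun ij hij => ?_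
            have hle : ij.1 ≤ n := by have := mem_antidiagonal.mp hij; omega
            rw [← mul_assoc, IH2 ij.1 hle a, Finset.sum_mul]
            exact Finset.sum_congr rfl fun pq _ => by rw [mul_assoc]
          have e1' : η0 a * v b = ∑ ij ∈ antidiagonal n, ∑ pq ∈ antidiagonal ij.2,
              θ ij.1 * (η pq.1 a * η (pq.2 + 1) b) :=
            e1.trans (sum_antidiagonal_assoc (fun p q j => θ p * (η q a * η (j + 1) b)) n)
          have e2 : v a * η0 b = ∑ ij ∈ antidiagonal n,
              θ ij.1 * (η (ij.2 + 1) a * η 0 b) := by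
            rw [hva a, Finset.sum_mul]
            exact Finset.sum_congr rfl fun ij _ => by rw [mul_assoc, hη0' b]
          have e3 : v (a * b) = ∑ ij ∈ antidiagonal n,
              (θ ij.1 * (η (ij.2 + 1) a * η 0 b) +
                ∑ pq ∈ antidiagonal ij.2, θ ij.1 * (η pq.1 a * η (pq.2 + 1) b)) := by
            rw [hva (a * b)]
            refine Finset.sum_congr rfl fun ij _ => ?_
            rw [hη (ij.2 + 1) a b, Finset.Nat.sum_antidiagonal_succ', mul_add,
              Finset.mul_sum]
          rw [e1', e2, e3, Finset.sum_add_distrib]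
          abel
        -- cocycle condition for w
        have cc3 : ∀ a : A, φ ∘ₗ (u a : M →ₗ[k] M) - (v a : N →ₗ[k] N) ∘ₗ φ -
            ((η0 a : N →ₗ[k] N) ∘ₗ w - w ∘ₗ (ξ0 a : M →ₗ[k] M)) = 0 := by
          intro a
          have f1 : φ ∘ₗ (u a : M →ₗ[k] M) = ∑ ij ∈ antidiagonal n,
              ∑ pq ∈ antidiagonal ij.2,
                (θ ij.1 : N →ₗ[k] N) ∘ₗ (Φ pq.1 ∘ₗ (ξ (pq.2 + 1) a : M →ₗ[k] M)) := by
            have g1 : φ ∘ₗ (u a : M →ₗ[k] M) = ∑ ij ∈ antidiagonal n,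
                ∑ pq ∈ antidiagonal ij.1,
                  (θ pq.1 : N →ₗ[k] N) ∘ₗ (Φ pq.2 ∘ₗ (ξ (ij.2 + 1) a : M →ₗ[k] M)) := by
              rw [hua a, comp_sum_linear]
              refine Finset.sum_congr rfl fun ij hij => ?_
              have hle : ij.1 ≤ n := by have := mem_antidiagonal.mp hij; omega
              rw [Module.End.mul_eq_comp, ← LinearMap.comp_assoc, IH3 ij.1 hle,
                sum_comp_linear]
              exact Finset.sum_congr rfl fun pq _ => by rw [LinearMap.comp_assoc]
            exact g1.trans (sum_antidiagonal_assoc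
              (fun p q j => (θ p : N →ₗ[k] N) ∘ₗ (Φ q ∘ₗ (ξ (j + 1) a : M →ₗ[k] M))) n)
          have f2 : w ∘ₗ (ξ0 a : M →ₗ[k] M) = ∑ ij ∈ antidiagonal n,
              (θ ij.1 : N →ₗ[k] N) ∘ₗ (Φ (ij.2 + 1) ∘ₗ (ξ 0 a : M →ₗ[k] M)) := by
            rw [hwdef, stepW, sum_comp_linear]
            exact Finset.sum_congr rfl fun ij _ => by
              rw [LinearMap.comp_assoc, hξ0' a]
          have f3 : (v a : N →ₗ[k] N) ∘ₗ φ = ∑ ij ∈ antidiagonal n,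
              (θ ij.1 : N →ₗ[k] N) ∘ₗ ((η (ij.2 + 1) a : N →ₗ[k] N) ∘ₗ Φ 0) := by
            rw [hva a, sum_comp_linear]
            exact Finset.sum_congr rfl fun ij _ => by
              rw [Module.End.mul_eq_comp, LinearMap.comp_assoc, hΦ0]
          have f4 : (η0 a : N →ₗ[k] N) ∘ₗ w = ∑ ij ∈ antidiagonal n,
              ∑ pq ∈ antidiagonal ij.2,
                (θ ij.1 : N →ₗ[k] N) ∘ₗ ((η pq.1 a : N →ₗ[k] N) ∘ₗ Φ (pq.2 + 1)) := by
            have g4 : (η0 a : N →ₗ[k] N) ∘ₗ w = ∑ ij ∈ antidiagonal n,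
                ∑ pq ∈ antidiagonal ij.1,
                  (θ pq.1 : N →ₗ[k] N) ∘ₗ ((η pq.2 a : N →ₗ[k] N) ∘ₗ Φ (ij.2 + 1)) := by
              rw [hwdef, stepW, comp_sum_linear]
              refine Finset.sum_congr rfl fun ij hij => ?_
              have hle : ij.1 ≤ n := by have := mem_antidiagonal.mp hij; omega
              rw [← LinearMap.comp_assoc, ← Module.End.mul_eq_comp, IH2 ij.1 hle a,
                sum_comp_linear]
              exact Finset.sum_congr rfl fun pq _ => by
                rw [Module.End.mul_eq_comp, LinearMap.comp_assoc]
            exact g4.trans (sum_antidiagonal_assoc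
              (fun p q j => (θ p : N →ₗ[k] N) ∘ₗ ((η q a : N →ₗ[k] N) ∘ₗ Φ (j + 1))) n)
          have hstep : ∀ j : ℕ,
              Φ (j + 1) ∘ₗ (ξ 0 a : M →ₗ[k] M) +
                ∑ pq ∈ antidiagonal j, Φ pq.1 ∘ₗ (ξ (pq.2 + 1) a : M →ₗ[k] M) =
              (η (j + 1) a : N →ₗ[k] N) ∘ₗ Φ 0 +
                ∑ pq ∈ antidiagonal j, (η pq.1 a : N →ₗ[k] N) ∘ₗ Φ (pq.2 + 1) := by
            intro j
            have := hφ (j + 1) a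
            rwa [Finset.Nat.sum_antidiagonal_succ', Finset.Nat.sum_antidiagonal_succ']
              at this
          have combined : ∑ ij ∈ antidiagonal n,
              ((θ ij.1 : N →ₗ[k] N) ∘ₗ (Φ (ij.2 + 1) ∘ₗ (ξ 0 a : M →ₗ[k] M)) +
                ∑ pq ∈ antidiagonal ij.2,
                  (θ ij.1 : N →ₗ[k] N) ∘ₗ (Φ pq.1 ∘ₗ (ξ (pq.2 + 1) a : M →ₗ[k] M))) =
              ∑ ij ∈ antidiagonal n,
              ((θ ij.1 : N →ₗ[k] N) ∘ₗ ((η (ij.2 + 1) a : N →ₗ[k] N) ∘ₗ Φ 0) +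
                ∑ pq ∈ antidiagonal ij.2,
                  (θ ij.1 : N →ₗ[k] N) ∘ₗ ((η pq.1 a : N →ₗ[k] N) ∘ₗ Φ (pq.2 + 1))) := by
            refine Finset.sum_congr rfl fun ij _ => ?_
            rw [← comp_sum_linear, ← comp_sum_linear, ← LinearMap.comp_add,
              ← LinearMap.comp_add, hstep ij.2]
          rw [Finset.sum_add_distrib, Finset.sum_add_distrib] at combined
          calc φ ∘ₗ (u a : M →ₗ[k] M) - (v a : N →ₗ[k] N) ∘ₗ φ -
              ((η0 a : N →ₗ[k] N) ∘ₗ w - w ∘ₗ (ξ0 a : M →ₗ[k] M))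
              = (w ∘ₗ (ξ0 a : M →ₗ[k] M) + φ ∘ₗ (u a : M →ₗ[k] M)) -
                ((v a : N →ₗ[k] N) ∘ₗ φ + (η0 a : N →ₗ[k] N) ∘ₗ w) := by abel
            _ = 0 := by rw [f1, f2, f3, f4, combined, sub_self]
        have hcob : CobEx ξ0 η0 φ u v w := h1 u v w ⟨cc1, cc2, cc3⟩
        have hPT := pickPQ_spec hcob
        have hPTs := PT_succ ξ0 η0 φ ξ η Φ n
        have hψ1 : ψ (n + 1) = (pickPQ ξ0 η0 φ u v w).1 := congrArg Prod.fst hPTs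
        have hθ1 : θ (n + 1) = (pickPQ ξ0 η0 φ u v w).2 := congrArg Prod.snd hPTs
        refine ⟨fun r => ?_, fun r => ?_, ?_⟩
        · have hur : u r = ξ0 r * ψ (n + 1) - ψ (n + 1) * ξ0 r := by
            rw [hψ1]; exact hPT.1 r
          rw [Finset.Nat.sum_antidiagonal_succ'
            (f := fun ij => ψ ij.1 * ξ ij.2 r), ← hua r, hur, hξ0' r]
          abel
        · have hvr : v r = η0 r * θ (n + 1) - θ (n + 1) * η0 r := by
            rw [hθ1]; exact hPT.2.1 r
          rw [Finset.Nat.sum_antidiagonal_succ'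
            (f := fun ij => θ ij.1 * η ij.2 r), ← hva r, hvr, hη0' r]
          abel
        · have hwr : w = φ ∘ₗ (ψ (n + 1) : M →ₗ[k] M) -
              (θ (n + 1) : N →ₗ[k] N) ∘ₗ φ := by
            rw [hψ1, hθ1]; exact hPT.2.2
          rw [Finset.Nat.sum_antidiagonal_succ'
            (f := fun ij => (θ ij.1 : N →ₗ[k] N) ∘ₗ Φ ij.2), hΦ0]
          have : ∑ ij ∈ antidiagonal n, (θ ij.1 : N →ₗ[k] N) ∘ₗ Φ (ij.2 + 1) = w := by
            rw [hwdef, stepW]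
          rw [this, hwr]
          abel
  refine ⟨ψ, θ, rfl, rfl, fun l r => ?_, fun l r => ?_, fun l => ?_⟩
  · have trivL : ∑ ij ∈ antidiagonal l, trivialCoeffs ξ0.toLinearMap ij.1 r * ψ ij.2 =
        ξ0 r * ψ l := by
      rw [Finset.sum_eq_single_of_mem (0, l) (by simp [Finset.HasAntidiagonal.mem_antidiagonal])
        (fun b hb hne => ?_)]
      · simp [trivialCoeffs]
      · have hb' := mem_antidiagonal.mp hb
        have hb1 : b.1 ≠ 0 := fun h => hne (Prod.ext h (by omega))
        simp [trivialCoeffs, hb1]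
    rw [trivL]
    exact (main l).1 r
  · have trivL : ∑ ij ∈ antidiagonal l, trivialCoeffs η0.toLinearMap ij.1 r * θ ij.2 =
        η0 r * θ l := by
      rw [Finset.sum_eq_single_of_mem (0, l) (by simp [Finset.HasAntidiagonal.mem_antidiagonal])
        (fun b hb hne => ?_)]
      · simp [trivialCoeffs]
      · have hb' := mem_antidiagonal.mp hb
        have hb1 : b.1 ≠ 0 := fun h => hne (Prod.ext h (by omega))
        simp [trivialCoeffs, hb1]
    rw [trivL]
    exact (main l).2.1 r
  · have trivL : ∑ ij ∈ antidiagonal l, trivialCoeffs φ ij.1 ∘ₗ (ψ ij.2 : M →ₗ[k] M) =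
        φ ∘ₗ (ψ l : M →ₗ[k] M) := by
      rw [Finset.sum_eq_single_of_mem (0, l) (by simp [Finset.HasAntidiagonal.mem_antidiagonal])
        (fun b hb hne => ?_)]
      · simp [trivialCoeffs]
      · have hb' := mem_antidiagonal.mp hb
        have hb1 : b.1 ≠ 0 := fun h => hne (Prod.ext h (by omega))
        simp [trivialCoeffs, hb1]
    rw [trivL]
    exact (main l).2.2
end

section
/- If H^1(A; End(M)) = 0, H^1(A; End(N)) = 0, and H^0(A; Hom_k(M,N)) = 0, then the module homomorphism φ: M → N is rigid. -/
open Finset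

variable {k A M N : Type*} [CommRing k] [Ring A] [Algebra k A]
  [AddCommGroup M] [Module k M] [AddCommGroup N] [Module k N]

open PowerSeries


section PS
variable {R : Type*} [Semiring R]

lemma coeff_mul_lowvanish {f : PowerSeries R} (n : ℕ)
    (h : ∀ p < n, coeff p f = 0) (g : PowerSeries R) :
    coeff n (f * g) = coeff n f * coeff 0 g := by
  rw [coeff_mul]
  apply Finset.sum_eq_single_of_mem (n, 0) (by simp)
  intro b hb hne
  rcases lt_or_ge b.1 n with h1 | h1
  · rw [h b.1 h1, zero_mul]
  · exfalso
    rw [Finset.HasAntidiagonal.mem_antidiagonal] at hb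
    exact hne (Prod.ext (by omega) (by omega))
end PS


/-- Generic step: solving the `ξ`-equation (or `η`-equation) at level `l`. -/
lemma exists_step {V : Type*} [AddCommGroup V] [Module k V]
    (ρ0 : A →ₐ[k] Module.End k V) (ρ : ℕ → (A →ₗ[k] Module.End k V))
    (h0 : ρ 0 = ρ0.toLinearMap)
    (hmul : ∀ (l : ℕ) (r s : A), ρ l (r * s) = ∑ ij ∈ antidiagonal l, ρ ij.1 r * ρ ij.2 s)
    (hV : ∀ u : A →ₗ[k] Module.End k V,
      (∀ a b : A, ρ0 a * u b - u (a * b) + u a * ρ0 b = 0) →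
      ∃ p : Module.End k V, ∀ a : A, u a = ρ0 a * p - p * ρ0 a)
    (ψ : ℕ → Module.End k V) (l : ℕ)
    (hE : ∀ m < l, ∀ r : A, ρ0 r * ψ m = ∑ ij ∈ antidiagonal m, ψ ij.1 * ρ ij.2 r) :
    ∃ p : Module.End k V, ∀ r : A,
      ρ0 r * p = p * ρ0 r + ∑ ij ∈ (antidiagonal l).erase (l, 0), ψ ij.1 * ρ ij.2 r := by
  classical
  set u : A →ₗ[k] Module.End k V :=
    ∑ ij ∈ (antidiagonal l).erase (l, 0), (LinearMap.mulLeft k (ψ ij.1)).comp (ρ ij.2) with hu_def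
  have hu : ∀ r : A, u r = ∑ ij ∈ (antidiagonal l).erase (l, 0), ψ ij.1 * ρ ij.2 r := by
    intro r
    simp [hu_def, LinearMap.sum_apply, LinearMap.mulLeft_apply]
  set Ψs : PowerSeries (Module.End k V) := PowerSeries.mk fun i => if i < l then ψ i else 0
    with hΨs
  set S : A → PowerSeries (Module.End k V) := fun r => PowerSeries.mk fun j => ρ j r with hS_def
  have hS : ∀ r s : A, S (r * s) = S r * S s := by
    intro r s
    apply PowerSeries.ext
    intro n
    rw [coeff_mul]
    simp only [hS_def, coeff_mk]
    exact hmul n r s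
  set E : A → PowerSeries (Module.End k V) :=
    fun r => C (ρ0 r) * Ψs - Ψs * S r with hE_def
  have hcoeff : ∀ (r : A) (i : ℕ), coeff i (E r) =
      ρ0 r * (if i < l then ψ i else 0) -
        ∑ ij ∈ antidiagonal i, (if ij.1 < l then ψ ij.1 else 0) * ρ ij.2 r := by
    intro r i
    simp only [hE_def]
    rw [map_sub, coeff_C_mul, coeff_mul]
    simp only [hΨs, hS_def, coeff_mk]
  have hElow : ∀ (r : A), ∀ i < l, coeff i (E r) = 0 := by
    intro r i hi
    rw [hcoeff, if_pos hi, hE i hi r, sub_eq_zero]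
    apply Finset.sum_congr rfl
    intro ij hij
    rw [Finset.HasAntidiagonal.mem_antidiagonal] at hij
    rw [if_pos (by omega : ij.1 < l)]
  have hEl : ∀ r : A, coeff l (E r) = - u r := by
    intro r
    rw [hcoeff, if_neg (lt_irrefl l), mul_zero, zero_sub, neg_inj, hu]
    rw [← Finset.sum_erase (antidiagonal l) (f := fun ij =>
      (if ij.1 < l then ψ ij.1 else 0) * ρ ij.2 r) (a := (l, 0)) (by simp)]
    apply Finset.sum_congr rfl
    intro ij hij
    rw [Finset.mem_erase, Finset.HasAntidiagonal.mem_antidiagonal] at hij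
    have hlt : ij.1 < l := by
      rcases hij with ⟨hne, hsum⟩
      rcases lt_or_ge ij.1 l with h1 | h1
      · exact h1
      · exact absurd (Prod.ext (by omega) (by omega)) hne
    rw [if_pos hlt]
  have hmulE : ∀ a b : A, E (a * b) = C (ρ0 a) * E b + E a * S b := by
    intro a b
    simp only [hE_def, map_mul, hS]
    noncomm_ring
  have hcoc : ∀ a b : A, ρ0 a * u b - u (a * b) + u a * ρ0 b = 0 := by
    intro a b
    have h1 := congrArg (coeff l) (hmulE a b)
    rw [map_add, coeff_C_mul, hEl, hEl, coeff_mul_lowvanish l (fun p hp => hElow a p hp) (S b),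
      hEl] at h1
    have h2 : coeff 0 (S b) = ρ0 b := by
      simp [hS_def, coeff_mk, h0]
    rw [h2, mul_neg, neg_mul, ← neg_add] at h1
    have h3 : u (a * b) = ρ0 a * u b + u a * ρ0 b := neg_injective h1
    rw [h3]
    abel
  obtain ⟨p, hp⟩ := hV u hcoc
  refine ⟨p, fun r => ?_⟩
  have h4 := hp r
  rw [hu r] at h4
  rw [h4]
  abel


def emb1 : Module.End k M →ₗ[k] Module.End k (M × N) where
  toFun f := f.prodMap 0
  map_add' f g := by ext x <;> simp
  map_smul' c f := by ext x <;> simp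

def emb2 : Module.End k N →ₗ[k] Module.End k (M × N) where
  toFun g := LinearMap.prodMap 0 g
  map_add' f g := by ext x <;> simp
  map_smul' c f := by ext x <;> simp

def embh : (M →ₗ[k] N) →ₗ[k] Module.End k (M × N) where
  toFun w := (LinearMap.inr k M N) ∘ₗ w ∘ₗ (LinearMap.fst k M N)
  map_add' f g := by ext x <;> simp
  map_smul' c f := by ext x <;> simp

section embs
variable (f f' : Module.End k M) (g g' : Module.End k N) (w w' : M →ₗ[k] N)

lemma emb1_mul : (emb1 (k := k) (N := N)) (f * f') = emb1 f * emb1 f' := by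
  ext x <;> simp [emb1, Module.End.mul_apply]

lemma emb2_mul : (emb2 (k := k) (M := M)) (g * g') = emb2 g * emb2 g' := by
  ext x <;> simp [emb2, Module.End.mul_apply]

lemma emb2_mul_embh : emb2 (M := M) g * embh w = embh ((g : N →ₗ[k] N) ∘ₗ w) := by
  ext x <;> simp [emb2, embh, Module.End.mul_apply]

lemma embh_mul_emb1 : embh w * emb1 (N := N) f = embh (w ∘ₗ (f : M →ₗ[k] M)) := by
  ext x <;> simp [emb1, embh, Module.End.mul_apply]

lemma embh_inj : Function.Injective (embh (k := k) (M := M) (N := N)) := by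
  intro w w' h
  ext m
  have := congrArg (fun T => (T (m, 0)).2) h
  simpa [embh] using this
end embs

set_option maxHeartbeats 1000000 in
lemma exists_step_phi
    (ξ0 : A →ₐ[k] Module.End k M) (η0 : A →ₐ[k] Module.End k N) (φ : M →ₗ[k] N)
    (ξ : ℕ → (A →ₗ[k] Module.End k M)) (η : ℕ → (A →ₗ[k] Module.End k N))
    (Φ : ℕ → (M →ₗ[k] N))
    (hx0 : ξ 0 = ξ0.toLinearMap) (hy0 : η 0 = η0.toLinearMap) (hΦ0 : Φ 0 = φ)
    (hφeq : ∀ (l : ℕ) (r : A), ∑ ij ∈ antidiagonal l, Φ ij.1 ∘ₗ (ξ ij.2 r : M →ₗ[k] M) =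
      ∑ ij ∈ antidiagonal l, (η ij.1 r : N →ₗ[k] N) ∘ₗ Φ ij.2)
    (hMN : ∀ w : M →ₗ[k] N,
      (∀ a : A, (η0 a : N →ₗ[k] N) ∘ₗ w - w ∘ₗ (ξ0 a : M →ₗ[k] M) = 0) → w = 0)
    (ψ : ℕ → Module.End k M) (θ : ℕ → Module.End k N) (l : ℕ)
    (hE1 : ∀ m ≤ l, ∀ r : A, ξ0 r * ψ m = ∑ ij ∈ antidiagonal m, ψ ij.1 * ξ ij.2 r)
    (hE2 : ∀ m ≤ l, ∀ r : A, η0 r * θ m = ∑ ij ∈ antidiagonal m, θ ij.1 * η ij.2 r)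
    (hE3 : ∀ m < l, φ ∘ₗ (ψ m : M →ₗ[k] M) =
      ∑ ij ∈ antidiagonal m, (θ ij.1 : N →ₗ[k] N) ∘ₗ Φ ij.2) :
    φ ∘ₗ (ψ l : M →ₗ[k] M) = ∑ ij ∈ antidiagonal l, (θ ij.1 : N →ₗ[k] N) ∘ₗ Φ ij.2 := by
  classical
  set R := Module.End k (M × N) with hR
  set Ψs : PowerSeries R := PowerSeries.mk fun i => if i ≤ l then emb1 (ψ i) else 0 with hΨdef
  set Θs : PowerSeries R := PowerSeries.mk fun i => if i ≤ l then emb2 (θ i) else 0 with hΘdef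
  set Fs : PowerSeries R := PowerSeries.mk fun j => embh (Φ j) with hFdef
  set X : A → PowerSeries R := fun a => PowerSeries.mk fun j => emb1 (ξ j a) with hXdef
  set Y : A → PowerSeries R := fun a => PowerSeries.mk fun j => emb2 (η j a) with hYdef
  set Cp : PowerSeries R := C (embh φ) with hCpdef
  set D' : PowerSeries R := Cp * Ψs - Θs * Fs with hD'def
  set Dm : M →ₗ[k] N :=
    φ ∘ₗ (ψ l : M →ₗ[k] M) - ∑ ij ∈ antidiagonal l, (θ ij.1 : N →ₗ[k] N) ∘ₗ Φ ij.2 with hDmdef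
  have hD' : ∀ i ≤ l, coeff i D' = embh (φ ∘ₗ (ψ i : M →ₗ[k] M) -
      ∑ ij ∈ antidiagonal i, (θ ij.1 : N →ₗ[k] N) ∘ₗ Φ ij.2) := by
    intro i hi
    rw [hD'def, map_sub, hCpdef, coeff_C_mul, coeff_mul, map_sub, map_sum]
    simp only [hΨdef, hΘdef, hFdef, coeff_mk, if_pos hi]
    congr 1
    all_goals first
      | exact embh_mul_emb1 (ψ i) φ
      | · apply Finset.sum_congr rfl
          intro ij hij
          rw [Finset.HasAntidiagonal.mem_antidiagonal] at hij
          rw [if_pos (by omega : ij.1 ≤ l), emb2_mul_embh]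
  have hD'low : ∀ i < l, coeff i D' = 0 := by
    intro i hi
    rw [hD' i hi.le, hE3 i hi, sub_self, map_zero]
  have hD'l : coeff l D' = embh Dm := hD' l le_rfl
  have hA : ∀ a : A, Fs * X a = Y a * Fs := by
    intro a
    apply PowerSeries.ext
    intro n
    rw [coeff_mul, coeff_mul]
    simp only [hFdef, hXdef, hYdef, coeff_mk]
    calc ∑ ij ∈ antidiagonal n, embh (Φ ij.1) * emb1 (ξ ij.2 a)
        = embh (∑ ij ∈ antidiagonal n, Φ ij.1 ∘ₗ (ξ ij.2 a : M →ₗ[k] M)) := by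
          rw [map_sum]; exact Finset.sum_congr rfl fun ij _ => embh_mul_emb1 _ _
      _ = embh (∑ ij ∈ antidiagonal n, (η ij.1 a : N →ₗ[k] N) ∘ₗ Φ ij.2) := by rw [hφeq n a]
      _ = ∑ ij ∈ antidiagonal n, emb2 (η ij.1 a) * embh (Φ ij.2) := by
          rw [map_sum]; exact Finset.sum_congr rfl fun ij _ => (emb2_mul_embh _ _).symm
  have hφ0 : ∀ a : A, (η0 a : N →ₗ[k] N) ∘ₗ φ = φ ∘ₗ (ξ0 a : M →ₗ[k] M) := by
    intro a
    have h00 := hφeq 0 a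
    simp only [Finset.Nat.antidiagonal_zero, Finset.sum_singleton] at h00
    rw [hx0, hΦ0, hy0] at h00
    exact h00.symm
  have hB : ∀ a : A, C (emb2 (η0 a)) * Cp = Cp * C (emb1 (ξ0 a)) := by
    intro a
    rw [hCpdef, ← map_mul, ← map_mul]
    congr 1
    rw [emb2_mul_embh, embh_mul_emb1, hφ0 a]
  have hEΨ : ∀ (a : A), ∀ i ≤ l, coeff i (C (emb1 (ξ0 a)) * Ψs - Ψs * X a) = 0 := by
    intro a i hi
    rw [map_sub, coeff_C_mul, coeff_mul, sub_eq_zero]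
    simp only [hΨdef, hXdef, coeff_mk, if_pos hi]
    calc emb1 (ξ0 a) * emb1 (ψ i) = emb1 (ξ0 a * ψ i) := (emb1_mul _ _).symm
      _ = emb1 (∑ ij ∈ antidiagonal i, ψ ij.1 * ξ ij.2 a) := by rw [hE1 i hi a]
      _ = ∑ ij ∈ antidiagonal i, (if ij.1 ≤ l then emb1 (ψ ij.1) else 0) * emb1 (ξ ij.2 a) := by
          rw [map_sum]
          apply Finset.sum_congr rfl
          intro ij hij
          rw [Finset.HasAntidiagonal.mem_antidiagonal] at hij
          rw [if_pos (by omega : ij.1 ≤ l), emb1_mul]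
  have hEΘ : ∀ (a : A), ∀ i ≤ l, coeff i (C (emb2 (η0 a)) * Θs - Θs * Y a) = 0 := by
    intro a i hi
    rw [map_sub, coeff_C_mul, coeff_mul, sub_eq_zero]
    simp only [hΘdef, hYdef, coeff_mk, if_pos hi]
    calc emb2 (η0 a) * emb2 (θ i) = emb2 (η0 a * θ i) := (emb2_mul _ _).symm
      _ = emb2 (∑ ij ∈ antidiagonal i, θ ij.1 * η ij.2 a) := by rw [hE2 i hi a]
      _ = ∑ ij ∈ antidiagonal i, (if ij.1 ≤ l then emb2 (θ ij.1) else 0) * emb2 (η ij.2 a) := by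
          rw [map_sum]
          apply Finset.sum_congr rfl
          intro ij hij
          rw [Finset.HasAntidiagonal.mem_antidiagonal] at hij
          rw [if_pos (by omega : ij.1 ≤ l), emb2_mul]
  have key : ∀ a : A, C (emb2 (η0 a)) * D' =
      Cp * (C (emb1 (ξ0 a)) * Ψs - Ψs * X a) -
        (C (emb2 (η0 a)) * Θs - Θs * Y a) * Fs + D' * X a := by
    intro a
    have h1 : C (emb2 (η0 a)) * Cp = Cp * C (emb1 (ξ0 a)) := hB a
    have h2 : Fs * X a = Y a * Fs := hA a
    have step1 : C (emb2 (η0 a)) * D' =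
        Cp * (C (emb1 (ξ0 a)) * Ψs) - (C (emb2 (η0 a)) * Θs) * Fs := by
      rw [hD'def, mul_sub, ← mul_assoc, h1, mul_assoc, mul_assoc]
    have step2 : Cp * (C (emb1 (ξ0 a)) * Ψs) =
        Cp * (C (emb1 (ξ0 a)) * Ψs - Ψs * X a) + (Cp * Ψs) * X a := by
      rw [mul_sub, mul_assoc, sub_add_cancel]
    have step3 : (C (emb2 (η0 a)) * Θs) * Fs =
        (C (emb2 (η0 a)) * Θs - Θs * Y a) * Fs + (Θs * Fs) * X a := by
      have h3 : (Θs * Y a) * Fs = (Θs * Fs) * X a := by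
        rw [mul_assoc, ← h2, ← mul_assoc]
      rw [sub_mul, h3, sub_add_cancel]
    rw [step1, step2, step3, hD'def, sub_mul (Cp * Ψs) (Θs * Fs) (X a)]
    abel
  have final : ∀ a : A, (η0 a : N →ₗ[k] N) ∘ₗ Dm - Dm ∘ₗ (ξ0 a : M →ₗ[k] M) = 0 := by
    intro a
    have hcl := congrArg (coeff l) (key a)
    have r1 : coeff l (Cp * (C (emb1 (ξ0 a)) * Ψs - Ψs * X a)) = 0 := by
      rw [hCpdef, coeff_C_mul, hEΨ a l le_rfl, mul_zero]
    have r2 : coeff l ((C (emb2 (η0 a)) * Θs - Θs * Y a) * Fs) = 0 := by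
      rw [coeff_mul]
      apply Finset.sum_eq_zero
      intro ij hij
      rw [Finset.HasAntidiagonal.mem_antidiagonal] at hij
      rw [hEΘ a ij.1 (by omega), zero_mul]
    have hX0 : coeff 0 (X a) = emb1 (ξ0 a) := by
      simp only [hXdef, coeff_mk, hx0]
      rfl
    have r3 : coeff l (D' * X a) = embh Dm * emb1 (ξ0 a) := by
      rw [coeff_mul]
      rw [Finset.sum_eq_single_of_mem (l, 0) (by simp)]
      · rw [hD'l, hX0]
      · intro b hb hbne
        rw [Finset.HasAntidiagonal.mem_antidiagonal] at hb
        have hblt : b.1 < l := by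
          rcases lt_or_ge b.1 l with h1 | h1
          · exact h1
          · exact absurd (Prod.ext (by omega) (by omega)) hbne
        rw [hD'low b.1 hblt, zero_mul]
    rw [coeff_C_mul, map_add] at hcl
    rw [map_sub (coeff l) (Cp * (C (emb1 (ξ0 a)) * Ψs - Ψs * X a))
      ((C (emb2 (η0 a)) * Θs - Θs * Y a) * Fs)] at hcl
    rw [r1, r2, r3, zero_sub, neg_zero, zero_add, hD'l] at hcl
    apply embh_inj
    rw [map_sub, map_zero, ← emb2_mul_embh, ← embh_mul_emb1, hcl, sub_self]
  have hDm0 : Dm = 0 := hMN Dm final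
  rw [hDmdef, sub_eq_zero] at hDm0
  exact hDm0

/-- The pair `(ψ_l, θ_l)` solves the gauge equations at level `l`, given the
previous coefficients `prev`. -/
def GoodStep (ξ0 : A →ₐ[k] Module.End k M) (η0 : A →ₐ[k] Module.End k N) (φ : M →ₗ[k] N)
    (ξ : ℕ → (A →ₗ[k] Module.End k M)) (η : ℕ → (A →ₗ[k] Module.End k N))
    (Φ : ℕ → (M →ₗ[k] N)) (l : ℕ) (prev : ℕ → Module.End k M × Module.End k N)
    (pq : Module.End k M × Module.End k N) : Prop :=
  (∀ r : A, ξ0 r * pq.1 =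
    ∑ ij ∈ antidiagonal l, (if ij.1 = l then pq else prev ij.1).1 * ξ ij.2 r) ∧
  (∀ r : A, η0 r * pq.2 =
    ∑ ij ∈ antidiagonal l, (if ij.1 = l then pq else prev ij.1).2 * η ij.2 r) ∧
  (φ ∘ₗ (pq.1 : M →ₗ[k] M) = ∑ ij ∈ antidiagonal l,
    ((if ij.1 = l then pq else prev ij.1).2 : N →ₗ[k] N) ∘ₗ Φ ij.2)

/-- Recursive construction of the gauge coefficients. -/
noncomputable def seqF (ξ0 : A →ₐ[k] Module.End k M) (η0 : A →ₐ[k] Module.End k N)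
    (φ : M →ₗ[k] N) (ξ : ℕ → (A →ₗ[k] Module.End k M)) (η : ℕ → (A →ₗ[k] Module.End k N))
    (Φ : ℕ → (M →ₗ[k] N)) : ℕ → ℕ → Module.End k M × Module.End k N
  | 0 => fun _ => (1, 1)
  | (n + 1) => fun m =>
      if m ≤ n then seqF ξ0 η0 φ ξ η Φ n m
      else @dite _ (∃ pq, GoodStep ξ0 η0 φ ξ η Φ (n + 1) (seqF ξ0 η0 φ ξ η Φ n) pq)
        (Classical.dec _) (fun h => h.choose) (fun _ => (1, 1))

lemma seqF_stable (ξ0 : A →ₐ[k] Module.End k M) (η0 : A →ₐ[k] Module.End k N)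
    (φ : M →ₗ[k] N) (ξ : ℕ → (A →ₗ[k] Module.End k M)) (η : ℕ → (A →ₗ[k] Module.End k N))
    (Φ : ℕ → (M →ₗ[k] N)) : ∀ n m, m ≤ n →
    seqF ξ0 η0 φ ξ η Φ n m = seqF ξ0 η0 φ ξ η Φ m m := by
  intro n
  induction n with
  | zero => intro m hm; rw [Nat.le_zero] at hm; rw [hm]
  | succ n ih =>
    intro m hm
    by_cases h : m ≤ n
    · rw [show seqF ξ0 η0 φ ξ η Φ (n + 1) m = seqF ξ0 η0 φ ξ η Φ n m by
        simp only [seqF]; rw [if_pos h]]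
      exact ih m h
    · have : m = n + 1 := by omega
      rw [this]


/-- If `H¹(A; End M) = 0`, `H¹(A; End N) = 0` and `H⁰(A; Hom_k(M,N)) = 0`, then the
module homomorphism `φ : M → N` is rigid: every formal one-parameter deformation of `φ`
is equivalent to the trivial deformation `(ξ₀, η₀, φ)`. -/
theorem rigid_of_hochschild_vanishing (ξ0 : A →ₐ[k] Module.End k M)
    (η0 : A →ₐ[k] Module.End k N) (φ : M →ₗ[k] N)
    (hM : ∀ u : A →ₗ[k] Module.End k M,
      (∀ a b : A, ξ0 a * u b - u (a * b) + u a * ξ0 b = 0) →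
      ∃ p : Module.End k M, ∀ a : A, u a = ξ0 a * p - p * ξ0 a)
    (hN : ∀ v : A →ₗ[k] Module.End k N,
      (∀ a b : A, η0 a * v b - v (a * b) + v a * η0 b = 0) →
      ∃ q : Module.End k N, ∀ a : A, v a = η0 a * q - q * η0 a)
    (hMN : ∀ w : M →ₗ[k] N,
      (∀ a : A, (η0 a : N →ₗ[k] N) ∘ₗ w - w ∘ₗ (ξ0 a : M →ₗ[k] M) = 0) → w = 0) :
    ∀ (ξ : ℕ → (A →ₗ[k] Module.End k M)) (η : ℕ → (A →ₗ[k] Module.End k N))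
        (Φ : ℕ → (M →ₗ[k] N)), IsFormalDeformation ξ0 η0 φ ξ η Φ →
      ∃ (ψ : ℕ → Module.End k M) (θ : ℕ → Module.End k N),
        IsFormalIso ξ η Φ (trivialCoeffs ξ0.toLinearMap) (trivialCoeffs η0.toLinearMap)
          (trivialCoeffs φ) ψ θ := by
  intro ξ η Φ hdef
  obtain ⟨hx0, hy0, hΦ0, hxm, hym, hφe⟩ := hdef
  have hxr : ∀ r : A, ξ 0 r = ξ0 r := fun r => by rw [hx0]; rfl
  have hyr : ∀ r : A, η 0 r = η0 r := fun r => by rw [hy0]; rfl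
  set F := seqF ξ0 η0 φ ξ η Φ with hF
  set ψ : ℕ → Module.End k M := fun l => (F l l).1 with hψdef
  set θ : ℕ → Module.End k N := fun l => (F l l).2 with hθdef
  have hst : ∀ n m, m ≤ n → F n m = F m m := seqF_stable ξ0 η0 φ ξ η Φ
  have main : ∀ l : ℕ,
      (∀ r : A, ξ0 r * ψ l = ∑ ij ∈ antidiagonal l, ψ ij.1 * ξ ij.2 r) ∧
      (∀ r : A, η0 r * θ l = ∑ ij ∈ antidiagonal l, θ ij.1 * η ij.2 r) ∧
      (φ ∘ₗ (ψ l : M →ₗ[k] M) = ∑ ij ∈ antidiagonal l,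
        (θ ij.1 : N →ₗ[k] N) ∘ₗ Φ ij.2) := by
    intro l
    induction l using Nat.strong_induction_on with
    | _ l IH =>
      match l with
      | 0 =>
        refine ⟨fun r => ?_, fun r => ?_, ?_⟩
        · simp [hψdef, hF, seqF, Finset.Nat.antidiagonal_zero, hxr]
        · simp [hθdef, hF, seqF, Finset.Nat.antidiagonal_zero, hyr]
        · show φ ∘ₗ ((1 : Module.End k M) : M →ₗ[k] M) = _
          simp [hθdef, hF, seqF, Finset.Nat.antidiagonal_zero, hΦ0, Module.End.one_eq_id]
      | (n + 1) =>
        obtain ⟨p, hp⟩ := exists_step ξ0 ξ hx0 hxm hM ψ (n + 1) (fun m hm => (IH m hm).1)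
        obtain ⟨q, hq⟩ := exists_step η0 η hy0 hym hN θ (n + 1) (fun m hm => (IH m hm).2.1)
        set ψ' : ℕ → Module.End k M := fun i => if i = n + 1 then p else ψ i with hψ'def
        set θ' : ℕ → Module.End k N := fun i => if i = n + 1 then q else θ i with hθ'def
        have hψ'top : ψ' (n + 1) = p := if_pos rfl
        have hθ'top : θ' (n + 1) = q := if_pos rfl
        have hψ'lt : ∀ i, i ≠ n + 1 → ψ' i = ψ i := fun i hi => if_neg hi
        have hθ'lt : ∀ i, i ≠ n + 1 → θ' i = θ i := fun i hi => if_neg hi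
        have hmem : ((n + 1 : ℕ), (0 : ℕ)) ∈ antidiagonal (n + 1) := by simp
        have hg1 : ∀ m ≤ n + 1, ∀ r : A,
            ξ0 r * ψ' m = ∑ ij ∈ antidiagonal m, ψ' ij.1 * ξ ij.2 r := by
          intro m hm r
          rcases lt_or_eq_of_le hm with h1 | h1
          · rw [hψ'lt m (by omega), (IH m h1).1 r]
            apply Finset.sum_congr rfl
            intro ij hij
            rw [Finset.HasAntidiagonal.mem_antidiagonal] at hij
            rw [hψ'lt ij.1 (by omega)]
          · subst h1
            rw [hψ'top, hp r, ← Finset.add_sum_erase _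
              (fun ij : ℕ × ℕ => ψ' ij.1 * ξ ij.2 r) hmem]
            congr 1
            · show p * ξ0 r = ψ' (n + 1) * ξ 0 r
              rw [hψ'top, hxr]
            · apply Finset.sum_congr rfl
              intro ij hij
              rw [Finset.mem_erase, Finset.HasAntidiagonal.mem_antidiagonal] at hij
              rw [hψ'lt ij.1 (fun hc => hij.1 (Prod.ext hc (by omega)))]
        have hg2 : ∀ m ≤ n + 1, ∀ r : A,
            η0 r * θ' m = ∑ ij ∈ antidiagonal m, θ' ij.1 * η ij.2 r := by
          intro m hm r
          rcases lt_or_eq_of_le hm with h1 | h1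
          · rw [hθ'lt m (by omega), (IH m h1).2.1 r]
            apply Finset.sum_congr rfl
            intro ij hij
            rw [Finset.HasAntidiagonal.mem_antidiagonal] at hij
            rw [hθ'lt ij.1 (by omega)]
          · subst h1
            rw [hθ'top, hq r, ← Finset.add_sum_erase _
              (fun ij : ℕ × ℕ => θ' ij.1 * η ij.2 r) hmem]
            congr 1
            · show q * η0 r = θ' (n + 1) * η 0 r
              rw [hθ'top, hyr]
            · apply Finset.sum_congr rfl
              intro ij hij
              rw [Finset.mem_erase, Finset.HasAntidiagonal.mem_antidiagonal] at hij
              rw [hθ'lt ij.1 (fun hc => hij.1 (Prod.ext hc (by omega)))]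
        have hg3low : ∀ m < n + 1, φ ∘ₗ (ψ' m : M →ₗ[k] M) =
            ∑ ij ∈ antidiagonal m, (θ' ij.1 : N →ₗ[k] N) ∘ₗ Φ ij.2 := by
          intro m hm
          rw [hψ'lt m (by omega), (IH m hm).2.2]
          apply Finset.sum_congr rfl
          intro ij hij
          rw [Finset.HasAntidiagonal.mem_antidiagonal] at hij
          rw [hθ'lt ij.1 (by omega)]
        have hg3 := exists_step_phi ξ0 η0 φ ξ η Φ hx0 hy0 hΦ0 hφe hMN ψ' θ' (n + 1)
          hg1 hg2 hg3low
        have hFn : ∀ i ≤ n, F n i = (ψ i, θ i) := by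
          intro i hi
          rw [hst n i hi]
        have hex : ∃ pq, GoodStep ξ0 η0 φ ξ η Φ (n + 1) (F n) pq := by
          have hsum1 : ∀ r : A, ∑ ij ∈ antidiagonal (n + 1),
              (if ij.1 = n + 1 then ((p, q) : Module.End k M × Module.End k N)
                else F n ij.1).1 * ξ ij.2 r =
              ∑ ij ∈ antidiagonal (n + 1), ψ' ij.1 * ξ ij.2 r := by
            intro r
            apply Finset.sum_congr rfl
            intro ij hij
            rw [Finset.HasAntidiagonal.mem_antidiagonal] at hij
            by_cases hc : ij.1 = n + 1
            · rw [if_pos hc, hc, hψ'top]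
            · rw [if_neg hc, hFn ij.1 (by omega), hψ'lt ij.1 hc]
          have hsum2 : ∀ r : A, ∑ ij ∈ antidiagonal (n + 1),
              (if ij.1 = n + 1 then ((p, q) : Module.End k M × Module.End k N)
                else F n ij.1).2 * η ij.2 r =
              ∑ ij ∈ antidiagonal (n + 1), θ' ij.1 * η ij.2 r := by
            intro r
            apply Finset.sum_congr rfl
            intro ij hij
            rw [Finset.HasAntidiagonal.mem_antidiagonal] at hij
            by_cases hc : ij.1 = n + 1
            · rw [if_pos hc, hc, hθ'top]
            · rw [if_neg hc, hFn ij.1 (by omega), hθ'lt ij.1 hc]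
          have hsum3 : ∑ ij ∈ antidiagonal (n + 1),
              (((if ij.1 = n + 1 then ((p, q) : Module.End k M × Module.End k N)
                else F n ij.1).2 : Module.End k N) : N →ₗ[k] N) ∘ₗ Φ ij.2 =
              ∑ ij ∈ antidiagonal (n + 1), (θ' ij.1 : N →ₗ[k] N) ∘ₗ Φ ij.2 := by
            apply Finset.sum_congr rfl
            intro ij hij
            rw [Finset.HasAntidiagonal.mem_antidiagonal] at hij
            by_cases hc : ij.1 = n + 1
            · rw [if_pos hc, hc, hθ'top]
            · rw [if_neg hc, hFn ij.1 (by omega), hθ'lt ij.1 hc]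
          refine ⟨(p, q), fun r => ?_, fun r => ?_, ?_⟩
          · rw [hsum1 r, ← hg1 (n + 1) le_rfl r, hψ'top]
          · rw [hsum2 r, ← hg2 (n + 1) le_rfl r, hθ'top]
          · rw [hsum3, ← hg3, hψ'top]
        have hval : F (n + 1) (n + 1) = hex.choose := by
          show seqF ξ0 η0 φ ξ η Φ (n + 1) (n + 1) = _
          simp only [seqF]
          rw [if_neg (by omega), dif_pos hex]
        have hGood := hex.choose_spec
        rw [← hval] at hGood
        obtain ⟨hG1, hG2, hG3⟩ := hGood
        have hψtop : ψ (n + 1) = (F (n + 1) (n + 1)).1 := rfl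
        have hθtop : θ (n + 1) = (F (n + 1) (n + 1)).2 := rfl
        have hconv : ∀ ij : ℕ × ℕ, ij ∈ antidiagonal (n + 1) →
            (if ij.1 = n + 1 then F (n + 1) (n + 1) else F n ij.1) = (ψ ij.1, θ ij.1) := by
          intro ij hij
          rw [Finset.HasAntidiagonal.mem_antidiagonal] at hij
          by_cases hc : ij.1 = n + 1
          · rw [if_pos hc, hc]
          · rw [if_neg hc, hFn ij.1 (by omega)]
        refine ⟨fun r => ?_, fun r => ?_, ?_⟩
        · rw [hψtop, hG1 r]
          apply Finset.sum_congr rfl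
          intro ij hij
          rw [hconv ij hij]
        · rw [hθtop, hG2 r]
          apply Finset.sum_congr rfl
          intro ij hij
          rw [hconv ij hij]
        · rw [show (ψ (n + 1) : M →ₗ[k] M) =
            ((F (n + 1) (n + 1)).1 : M →ₗ[k] M) from rfl, hG3]
          apply Finset.sum_congr rfl
          intro ij hij
          rw [hconv ij hij]
  refine ⟨ψ, θ, rfl, rfl, fun l r => ?_, fun l r => ?_, fun l => ?_⟩
  · rw [Finset.sum_eq_single_of_mem ((0 : ℕ), l) (by simp)]
    · have h0 : trivialCoeffs ξ0.toLinearMap (((0 : ℕ), l) : ℕ × ℕ).1 r = ξ0 r := by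
        simp [trivialCoeffs]
      rw [h0]
      exact (main l).1 r
    · intro b hb hbne
      rw [Finset.HasAntidiagonal.mem_antidiagonal] at hb
      have : b.1 ≠ 0 := fun hc => hbne (Prod.ext hc (by omega))
      simp [trivialCoeffs, this]
  · rw [Finset.sum_eq_single_of_mem ((0 : ℕ), l) (by simp)]
    · have h0 : trivialCoeffs η0.toLinearMap (((0 : ℕ), l) : ℕ × ℕ).1 r = η0 r := by
        simp [trivialCoeffs]
      rw [h0]
      exact (main l).2.1 r
    · intro b hb hbne
      rw [Finset.HasAntidiagonal.mem_antidiagonal] at hb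
      have : b.1 ≠ 0 := fun hc => hbne (Prod.ext hc (by omega))
      simp [trivialCoeffs, this]
  · rw [Finset.sum_eq_single_of_mem ((0 : ℕ), l) (by simp)]
    · have h0 : trivialCoeffs φ (((0 : ℕ), l) : ℕ × ℕ).1 = φ := by
        simp [trivialCoeffs]
      rw [h0]
      exact (main l).2.2
    · intro b hb hbne
      rw [Finset.HasAntidiagonal.mem_antidiagonal] at hb
      have : b.1 ≠ 0 := fun hc => hbne (Prod.ext hc (by omega))
      simp [trivialCoeffs, this]
end
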